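/- arXiv:1301.3419 — 9 statements merged into one kernel-verified Lean document; each statement's English description precedes it below -/
import Mathlib

section
/- Fix λ ∈ ℝ and functions f, g : ℕ → ℝ. For every finite set X, the sum over all ordered pairs (S, T) of subsets of X with S ∪ T = X of λ^{#(S∩T)} · f(#S) · g(#T) equals Σ_{(u₁,u₂,u₃) ∈ ℕ³, u₁+u₂+u₃ = #X} λ^{u₁} · (#X)!/(u₁!·u₂!·u₃!) · f(u₁+u₂) · g(u₁+u₃); in other words, it equals (f ⋆ g)(#X). -/
/-- The weight-`lam` product on functions `ℕ → ℝ`, encoding the product of the complete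
free commutative Rota–Baxter algebra of weight `lam` on `ℝ` in the basis `1_k`:
`(a ⋆ b)(u) = Σ_{u₁+u₂+u₃ = u} lam^{u₁} · u!/(u₁!·u₂!·u₃!) · a(u₁+u₂) · b(u₁+u₃)`. -/
noncomputable def starMul (lam : ℝ) (a b : ℕ → ℝ) : ℕ → ℝ := fun u =>
  ∑ p ∈ Finset.HasAntidiagonal.antidiagonal u, ∑ q ∈ Finset.HasAntidiagonal.antidiagonal p.2,
    lam ^ p.1 * ((Nat.factorial u : ℝ) /
      ((Nat.factorial p.1 : ℝ) * (Nat.factorial q.1 : ℝ) * (Nat.factorial q.2 : ℝ))) *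
      a (p.1 + q.1) * b (p.1 + q.2)

/-- For a finite set `X`, the sum over all ordered pairs `(S, T)` of subsets of `X`
with `S ∪ T = X` of `lam^{#(S∩T)} · f(#S) · g(#T)` equals `(f ⋆ g)(#X)`. -/
theorem stmt1 {α : Type*} [DecidableEq α] (lam : ℝ) (f g : ℕ → ℝ) (X : Finset α) :
    ∑ p ∈ (X.powerset ×ˢ X.powerset).filter (fun p => p.1 ∪ p.2 = X),
      lam ^ (p.1 ∩ p.2).card * f p.1.card * g p.2.card
      = starMul lam f g X.card := by
  classical
  set n := X.card with hn
  have stepA : ∑ p ∈ (X.powerset ×ˢ X.powerset).filter (fun p => p.1 ∪ p.2 = X),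
      lam ^ (p.1 ∩ p.2).card * f p.1.card * g p.2.card
      = ∑ q ∈ X.powerset.sigma (fun S => S.powerset),
          lam ^ q.2.card * f q.1.card * g (n - q.1.card + q.2.card) := by
    refine Finset.sum_nbij' (fun p => ⟨p.1, p.1 ∩ p.2⟩) (fun q => (q.1, (X \ q.1) ∪ q.2))
      ?_ ?_ ?_ ?_ ?_
    · rintro ⟨S, T⟩ hp
      simp only [Finset.mem_filter, Finset.mem_product, Finset.mem_powerset] at hp
      simp only [Finset.mem_sigma, Finset.mem_powerset]
      exact ⟨hp.1.1, Finset.inter_subset_left⟩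
    · rintro ⟨S, B⟩ hq
      simp only [Finset.mem_sigma, Finset.mem_powerset] at hq
      simp only [Finset.mem_filter, Finset.mem_product, Finset.mem_powerset]
      obtain ⟨hS, hB⟩ := hq
      refine ⟨⟨hS, Finset.union_subset (Finset.sdiff_subset) (hB.trans hS)⟩, ?_⟩
      ext x
      simp only [Finset.mem_union, Finset.mem_sdiff]
      constructor
      · rintro (h | h | h)
        · exact hS h
        · exact h.1
        · exact hS (hB h)
      · intro hx
        by_cases hxS : x ∈ S
        · exact Or.inl hxS
        · exact Or.inr (Or.inl ⟨hx, hxS⟩)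
    · rintro ⟨S, T⟩ hp
      simp only [Finset.mem_filter, Finset.mem_product, Finset.mem_powerset] at hp
      obtain ⟨⟨hS, hT⟩, hST⟩ := hp
      simp only [Prod.mk.injEq]
      refine ⟨trivial, ?_⟩
      ext x
      simp only [Finset.mem_union, Finset.mem_sdiff, Finset.mem_inter]
      constructor
      · rintro (⟨hx, hxS⟩ | ⟨_, h⟩)
        · rcases Finset.mem_union.1 (hST ▸ hx) with h | h
          · exact absurd h hxS
          · exact h
        · exact h
      · intro hx
        by_cases hxS : x ∈ S
        · exact Or.inr ⟨hxS, hx⟩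
        · exact Or.inl ⟨hST ▸ Finset.mem_union_right _ hx, hxS⟩
    · rintro ⟨S, B⟩ hq
      simp only [Finset.mem_sigma, Finset.mem_powerset] at hq
      obtain ⟨hS, hB⟩ := hq
      have : S ∩ ((X \ S) ∪ B) = B := by
        ext x
        simp only [Finset.mem_inter, Finset.mem_union, Finset.mem_sdiff]
        constructor
        · rintro ⟨hxS, (⟨_, h⟩ | h)⟩
          · exact absurd hxS h
          · exact h
        · intro h
          exact ⟨hB h, Or.inr h⟩
      simp only [this]
    · rintro ⟨S, T⟩ hp
      simp only [Finset.mem_filter, Finset.mem_product, Finset.mem_powerset] at hp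
      obtain ⟨⟨hS, hT⟩, hST⟩ := hp
      have hcard : S.card + T.card = n + (S ∩ T).card := by
        rw [hn, ← hST]
        exact (Finset.card_union_add_card_inter S T).symm
      have hle : S.card ≤ n := hn ▸ Finset.card_le_card hS
      have : T.card = n - S.card + (S ∩ T).card := by omega
      rw [this]
  rw [stepA]
  have stepB : ∑ q ∈ X.powerset.sigma (fun S => S.powerset),
        lam ^ q.2.card * f q.1.card * g (n - q.1.card + q.2.card)
      = ∑ s ∈ Finset.range (n + 1), (n.choose s) •
          ∑ b ∈ Finset.range (s + 1), (s.choose b) •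
            (lam ^ b * f s * g (n - s + b)) := by
    rw [Finset.sum_sigma]
    have h1 : ∀ S ∈ X.powerset, ∑ B ∈ S.powerset,
        lam ^ B.card * f S.card * g (n - S.card + B.card)
        = ∑ b ∈ Finset.range (S.card + 1), (S.card.choose b) •
            (lam ^ b * f S.card * g (n - S.card + b)) := by
      intro S _
      exact Finset.sum_powerset_apply_card (fun b => lam ^ b * f S.card * g (n - S.card + b))
    rw [Finset.sum_congr rfl h1]
    exact Finset.sum_powerset_apply_card (fun s => ∑ b ∈ Finset.range (s + 1),
      (s.choose b) • (lam ^ b * f s * g (n - s + b)))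
  rw [stepB]
  unfold starMul
  rw [Finset.sum_sigma' (Finset.HasAntidiagonal.antidiagonal n) (fun p => Finset.HasAntidiagonal.antidiagonal p.2)]
  simp only [Finset.smul_sum]
  rw [Finset.sum_sigma' (Finset.range (n+1)) (fun s => Finset.range (s+1))
    (fun s b => (n.choose s) • ((s.choose b) • (lam ^ b * f s * g (n - s + b))))]
  refine Finset.sum_nbij' (fun x => ⟨(x.2, n - x.2), (x.1 - x.2, n - x.1)⟩)
    (fun y => ⟨y.1.1 + y.2.1, y.1.1⟩) ?_ ?_ ?_ ?_ ?_
  · rintro ⟨s, b⟩ hx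
    simp only [Finset.mem_sigma, Finset.mem_range, Nat.lt_succ_iff] at hx
    simp only [Finset.mem_sigma, Finset.HasAntidiagonal.mem_antidiagonal]
    omega
  · rintro ⟨⟨p1, p2⟩, q1, q2⟩ hy
    simp only [Finset.mem_sigma, Finset.HasAntidiagonal.mem_antidiagonal] at hy
    simp only [Finset.mem_sigma, Finset.mem_range, Nat.lt_succ_iff]
    omega
  · rintro ⟨s, b⟩ hx
    simp only [Finset.mem_sigma, Finset.mem_range, Nat.lt_succ_iff] at hx
    have : b + (s - b) = s := by omega
    simp only [this]
  · rintro ⟨⟨p1, p2⟩, q1, q2⟩ hy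
    simp only [Finset.mem_sigma, Finset.HasAntidiagonal.mem_antidiagonal] at hy
    have e1 : n - p1 = p2 := by omega
    have e2 : p1 + q1 - p1 = q1 := by omega
    have e3 : n - (p1 + q1) = q2 := by omega
    simp only [e1, e2, e3]
  · rintro ⟨s, b⟩ hx
    simp only [Finset.mem_sigma, Finset.mem_range, Nat.lt_succ_iff] at hx
    obtain ⟨hs, hb⟩ := hx
    have e1 : b + (s - b) = s := by omega
    have e2 : b + (n - s) = n - s + b := by omega
    simp only [e1, e2, nsmul_eq_mul]
    rw [Nat.cast_choose ℝ hs, Nat.cast_choose ℝ hb]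
    have h1 : (Nat.factorial s : ℝ) ≠ 0 := Nat.cast_ne_zero.2 (Nat.factorial_ne_zero s)
    have h2 : (Nat.factorial b : ℝ) ≠ 0 := Nat.cast_ne_zero.2 (Nat.factorial_ne_zero b)
    have h3 : (Nat.factorial (s - b) : ℝ) ≠ 0 := Nat.cast_ne_zero.2 (Nat.factorial_ne_zero _)
    have h4 : (Nat.factorial (n - s) : ℝ) ≠ 0 := Nat.cast_ne_zero.2 (Nat.factorial_ne_zero _)
    field_simp
end

section
/- Fix λ ∈ ℝ. The weight-λ product ⋆ on functions ℕ → ℝ is commutative and associative, is ℝ-bilinear with respect to pointwise addition and scalar multiplication, and has δ₀ as a two-sided identity: δ₀ ⋆ a = a ⋆ δ₀ = a for every a : ℕ → ℝ. -/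
/-- `δ_k : ℕ → ℝ`, the function with `δ_k(k) = 1` and `δ_k(m) = 0` for `m ≠ k`. -/
noncomputable def delta (k : ℕ) : ℕ → ℝ := fun m => if m = k then 1 else 0

namespace StarAux

open Finset

/-- shift of a sequence -/
def sh (a : ℕ → ℝ) : ℕ → ℝ := fun n => a (n + 1)

/-- summand of `starMul` with explicit factorial level -/
noncomputable def T (lam : ℝ) (a b : ℕ → ℝ) (u : ℕ) (p q : ℕ × ℕ) : ℝ :=
  lam ^ p.1 * ((Nat.factorial u : ℝ) /
      ((Nat.factorial p.1 : ℝ) * (Nat.factorial q.1 : ℝ) * (Nat.factorial q.2 : ℝ))) *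
      a (p.1 + q.1) * b (p.1 + q.2)

lemma fact_ne (n : ℕ) : ((Nat.factorial n : ℝ)) ≠ 0 :=
  Nat.cast_ne_zero.mpr (Nat.factorial_ne_zero n)

lemma star_apply (lam : ℝ) (a b : ℕ → ℝ) (u : ℕ) :
    starMul lam a b u =
      ∑ p ∈ antidiagonal u, ∑ q ∈ antidiagonal p.2, T lam a b u p q := rfl

lemma star_comm (lam : ℝ) (a b : ℕ → ℝ) : starMul lam a b = starMul lam b a := by
  funext u
  rw [star_apply, star_apply]
  refine Finset.sum_congr rfl fun p _ => ?_
  conv_lhs => rw [← Finset.Nat.sum_antidiagonal_swap]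
  refine Finset.sum_congr rfl fun q _ => ?_
  simp only [T, Prod.fst_swap, Prod.snd_swap]
  ring

lemma star_add_left (lam : ℝ) (a b c : ℕ → ℝ) :
    starMul lam (a + b) c = starMul lam a c + starMul lam b c := by
  funext u
  simp only [star_apply, Pi.add_apply, T]
  rw [← Finset.sum_add_distrib]
  refine Finset.sum_congr rfl fun p _ => ?_
  rw [← Finset.sum_add_distrib]
  refine Finset.sum_congr rfl fun q _ => ?_
  ring

lemma star_add_right (lam : ℝ) (a b c : ℕ → ℝ) :
    starMul lam a (b + c) = starMul lam a b + starMul lam a c := by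
  funext u
  simp only [star_apply, Pi.add_apply, T]
  rw [← Finset.sum_add_distrib]
  refine Finset.sum_congr rfl fun p _ => ?_
  rw [← Finset.sum_add_distrib]
  refine Finset.sum_congr rfl fun q _ => ?_
  ring

lemma star_smul_left (lam r : ℝ) (a b : ℕ → ℝ) :
    starMul lam (r • a) b = r • starMul lam a b := by
  funext u
  simp only [star_apply, Pi.smul_apply, smul_eq_mul, T, Finset.mul_sum]
  refine Finset.sum_congr rfl fun p _ => ?_
  refine Finset.sum_congr rfl fun q _ => ?_
  ring

lemma star_smul_right (lam r : ℝ) (a b : ℕ → ℝ) :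
    starMul lam a (r • b) = r • starMul lam a b := by
  funext u
  simp only [star_apply, Pi.smul_apply, smul_eq_mul, T, Finset.mul_sum]
  refine Finset.sum_congr rfl fun p _ => ?_
  refine Finset.sum_congr rfl fun q _ => ?_
  ring

lemma delta_left (lam : ℝ) (a : ℕ → ℝ) : starMul lam (delta 0) a = a := by
  funext u
  rw [star_apply]
  rw [Finset.sum_eq_single (0, u)]
  · rw [Finset.sum_eq_single (0, u)]
    · simp [T, delta, div_self (fact_ne u)]
    · intro q hq hne
      have hmem := Finset.HasAntidiagonal.mem_antidiagonal.mp hq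
      have hq1 : q.1 ≠ 0 := by
        intro h0
        apply hne
        have : q.2 = u := by omega
        exact Prod.ext h0 this
      simp [T, delta, hq1]
    · intro h
      exact absurd (Finset.HasAntidiagonal.mem_antidiagonal.mpr (by simp)) h
  · intro p hp hne
    have hmem := Finset.HasAntidiagonal.mem_antidiagonal.mp hp
    have hp1 : p.1 ≠ 0 := by
      intro h0
      apply hne
      have : p.2 = u := by omega
      exact Prod.ext h0 this
    refine Finset.sum_eq_zero fun q hq => ?_
    have : p.1 + q.1 ≠ 0 := by omega
    simp [T, delta, this, hp1]
  · intro h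
    exact absurd (Finset.HasAntidiagonal.mem_antidiagonal.mpr (by simp)) h

lemma aux1 (lam : ℝ) (a b : ℕ → ℝ) (u : ℕ) :
    (∑ p ∈ antidiagonal (u + 1), ∑ q ∈ antidiagonal p.2, (p.1 : ℝ) * T lam a b u p q)
      = lam * starMul lam (sh a) (sh b) u := by
  rw [Finset.Nat.sum_antidiagonal_succ]
  simp only [Nat.cast_zero, zero_mul, Finset.sum_const_zero, zero_add]
  rw [star_apply, Finset.mul_sum]
  refine Finset.sum_congr rfl fun p hp => ?_
  rw [Finset.mul_sum]
  refine Finset.sum_congr rfl fun q hq => ?_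
  simp only [T, sh]
  have h0 : ((p.1 : ℝ) + 1) ≠ 0 := by positivity
  have h1 := fact_ne p.1; have h2 := fact_ne q.1; have h3 := fact_ne q.2
  rw [show p.1 + 1 + q.1 = p.1 + q.1 + 1 by omega,
      show p.1 + 1 + q.2 = p.1 + q.2 + 1 by omega, Nat.factorial_succ, pow_succ]
  push_cast
  field_simp

lemma aux2 (lam : ℝ) (a b : ℕ → ℝ) (u : ℕ) :
    (∑ p ∈ antidiagonal (u + 1), ∑ q ∈ antidiagonal p.2, (q.1 : ℝ) * T lam a b u p q)
      = starMul lam (sh a) b u := by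
  rw [Finset.Nat.sum_antidiagonal_succ']
  simp only [Finset.Nat.antidiagonal_zero, Finset.sum_singleton, Nat.cast_zero, zero_mul,
    zero_add]
  rw [star_apply]
  refine Finset.sum_congr rfl fun p hp => ?_
  rw [Finset.Nat.sum_antidiagonal_succ]
  simp only [Nat.cast_zero, zero_mul, zero_add]
  refine Finset.sum_congr rfl fun q hq => ?_
  simp only [T, sh]
  have h0 : ((q.1 : ℝ) + 1) ≠ 0 := by positivity
  have h1 := fact_ne p.1; have h2 := fact_ne q.1; have h3 := fact_ne q.2
  rw [show p.1 + (q.1 + 1) = p.1 + q.1 + 1 by omega, Nat.factorial_succ]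
  push_cast
  field_simp

lemma aux3 (lam : ℝ) (a b : ℕ → ℝ) (u : ℕ) :
    (∑ p ∈ antidiagonal (u + 1), ∑ q ∈ antidiagonal p.2, (q.2 : ℝ) * T lam a b u p q)
      = starMul lam a (sh b) u := by
  rw [Finset.Nat.sum_antidiagonal_succ']
  simp only [Finset.Nat.antidiagonal_zero, Finset.sum_singleton, Nat.cast_zero, zero_mul,
    zero_add]
  rw [star_apply]
  refine Finset.sum_congr rfl fun p hp => ?_
  rw [Finset.Nat.sum_antidiagonal_succ']
  simp only [Nat.cast_zero, zero_mul, zero_add]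
  refine Finset.sum_congr rfl fun q hq => ?_
  simp only [T, sh]
  have h0 : ((q.2 : ℝ) + 1) ≠ 0 := by positivity
  have h1 := fact_ne p.1; have h2 := fact_ne q.1; have h3 := fact_ne q.2
  rw [show p.1 + (q.2 + 1) = p.1 + q.2 + 1 by omega, Nat.factorial_succ]
  push_cast
  field_simp

lemma star_succ (lam : ℝ) (a b : ℕ → ℝ) (u : ℕ) :
    starMul lam a b (u + 1) =
      starMul lam (sh a) b u + starMul lam a (sh b) u
        + lam * starMul lam (sh a) (sh b) u := by
  have key : starMul lam a b (u + 1) =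
      (∑ p ∈ antidiagonal (u + 1), ∑ q ∈ antidiagonal p.2, (p.1 : ℝ) * T lam a b u p q)
      + ((∑ p ∈ antidiagonal (u + 1), ∑ q ∈ antidiagonal p.2, (q.1 : ℝ) * T lam a b u p q)
      + (∑ p ∈ antidiagonal (u + 1), ∑ q ∈ antidiagonal p.2, (q.2 : ℝ) * T lam a b u p q)) := by
    rw [star_apply, ← Finset.sum_add_distrib, ← Finset.sum_add_distrib]
    refine Finset.sum_congr rfl fun p hp => ?_
    rw [← Finset.sum_add_distrib, ← Finset.sum_add_distrib]
    refine Finset.sum_congr rfl fun q hq => ?_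
    have hp' := Finset.HasAntidiagonal.mem_antidiagonal.mp hp
    have hq' := Finset.HasAntidiagonal.mem_antidiagonal.mp hq
    have hsum : ((p.1 : ℝ) + q.1 + q.2) = (u : ℝ) + 1 := by
      have : p.1 + q.1 + q.2 = u + 1 := by omega
      exact_mod_cast congrArg (Nat.cast : ℕ → ℝ) this
    simp only [T, Nat.factorial_succ]
    push_cast
    rw [← hsum]
    ring
  rw [key, aux1, aux2, aux3]
  ring

lemma sh_star (lam : ℝ) (a b : ℕ → ℝ) :
    sh (starMul lam a b) =
      starMul lam (sh a) b + starMul lam a (sh b) + lam • starMul lam (sh a) (sh b) := by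
  funext n
  have := star_succ lam a b n
  simp only [Pi.add_apply, Pi.smul_apply, smul_eq_mul]
  exact this

lemma star_zero (lam : ℝ) (a b : ℕ → ℝ) : starMul lam a b 0 = a 0 * b 0 := by
  norm_num [starMul]

lemma star_assoc (lam : ℝ) (u : ℕ) :
    ∀ a b c : ℕ → ℝ,
      starMul lam (starMul lam a b) c u = starMul lam a (starMul lam b c) u := by
  induction u with
  | zero =>
      intro a b c
      rw [star_zero, star_zero, star_zero, star_zero, mul_assoc]
  | succ u ih =>
      intro a b c
      rw [star_succ, star_succ]
      simp only [sh_star, star_add_left, star_add_right, star_smul_left, star_smul_right,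
        Pi.add_apply, Pi.smul_apply, smul_eq_mul]
      simp only [ih]
      ring

end StarAux

/-- The weight-`lam` product `⋆` is commutative, associative, ℝ-bilinear with respect
to pointwise addition and scalar multiplication, and has `δ₀` as a two-sided identity. -/
theorem stmt2 (lam : ℝ) :
    (∀ a b : ℕ → ℝ, starMul lam a b = starMul lam b a) ∧
    (∀ a b c : ℕ → ℝ, starMul lam (starMul lam a b) c = starMul lam a (starMul lam b c)) ∧
    (∀ a b c : ℕ → ℝ, starMul lam (a + b) c = starMul lam a c + starMul lam b c) ∧
    (∀ a b c : ℕ → ℝ, starMul lam a (b + c) = starMul lam a b + starMul lam a c) ∧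
    (∀ (r : ℝ) (a b : ℕ → ℝ), starMul lam (r • a) b = r • starMul lam a b) ∧
    (∀ (r : ℝ) (a b : ℕ → ℝ), starMul lam a (r • b) = r • starMul lam a b) ∧
    (∀ a : ℕ → ℝ, starMul lam (delta 0) a = a) ∧
    (∀ a : ℕ → ℝ, starMul lam a (delta 0) = a) :=
  ⟨StarAux.star_comm lam,
   fun a b c => funext fun u => StarAux.star_assoc lam u a b c,
   StarAux.star_add_left lam,
   StarAux.star_add_right lam,
   StarAux.star_smul_left lam,
   StarAux.star_smul_right lam,
   StarAux.delta_left lam,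
   fun a => (StarAux.star_comm lam a (delta 0)).trans (StarAux.delta_left lam a)⟩
end

section
/- (Generalized Product Formula.) Fix λ ∈ ℝ, an integer k ≥ 1 and functions f₁, …, f_k : ℕ → ℝ. For every n ∈ ℕ, the left-associated iterated product (⋯(f₁ ⋆ f₂) ⋆ ⋯ ) ⋆ f_k evaluated at n equals the sum over all k-tuples (T₁, …, T_k) of (not necessarily disjoint) subsets of [n] = {1,…,n} with T₁ ∪ ⋯ ∪ T_k = [n] of λ^{(#T₁ + ⋯ + #T_k) − n} · f₁(#T₁) ⋯ f_k(#T_k). -/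
/-- The left-associated iterated `⋆`-product: `starIter lam f j = f 0 ⋆ f 1 ⋆ ⋯ ⋆ f j`. -/
noncomputable def starIter (lam : ℝ) (f : ℕ → ℕ → ℝ) : ℕ → ℕ → ℝ
  | 0 => f 0
  | j + 1 => starMul lam (starIter lam f j) (f (j + 1))

open Finset

private lemma coeff_eq {M i j : ℕ} (hi : i ≤ M) (hj : j ≤ M - i) :
    ((M.factorial : ℝ) / ((i.factorial : ℝ) * (j.factorial : ℝ) * ((M - i - j).factorial : ℝ)))
      = (M.choose i : ℝ) * ((M - i).choose j : ℝ) := by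
  have h1 : M.choose i * i.factorial * (M - i).factorial = M.factorial :=
    Nat.choose_mul_factorial_mul_factorial hi
  have h2 : (M - i).choose j * j.factorial * (M - i - j).factorial = (M - i).factorial :=
    Nat.choose_mul_factorial_mul_factorial hj
  have hM : (M.factorial : ℝ) = (M.choose i : ℝ) * ((M - i).choose j : ℝ) *
      ((i.factorial : ℝ) * (j.factorial : ℝ) * ((M - i - j).factorial : ℝ)) := by
    rw [← h1, ← h2]; push_cast; ring
  have h3 : (i.factorial : ℝ) * (j.factorial : ℝ) * ((M - i - j).factorial : ℝ) ≠ 0 := by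
    positivity
  rw [hM, mul_div_assoc, div_self h3, mul_one]

/-- The weight-`lam` product expressed as a sum over covering pairs. -/
lemma starMul_cover {N : ℕ} (lam : ℝ) (a b : ℕ → ℝ) (A : Finset (Fin N)) :
    starMul lam a b A.card =
      ∑ p ∈ Finset.univ.filter (fun p : Finset (Fin N) × Finset (Fin N) => p.1 ∪ p.2 = A),
        lam ^ (p.1.card + p.2.card - A.card) * a p.1.card * b p.2.card := by
  set M := A.card with hM
  -- Step 1: reparametrize the covering-pairs sum by (I, J) with I ⊆ A, J ⊆ A \ I
  have step1 : ∑ p ∈ Finset.univ.filter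
        (fun p : Finset (Fin N) × Finset (Fin N) => p.1 ∪ p.2 = A),
        lam ^ (p.1.card + p.2.card - M) * a p.1.card * b p.2.card
      = ∑ x ∈ A.powerset.sigma (fun I => (A \ I).powerset),
        lam ^ x.1.card * a (x.1.card + x.2.card) * b (M - x.2.card) := by
    refine Finset.sum_nbij' (fun p => (⟨p.1 ∩ p.2, A \ p.2⟩ : Σ _ : Finset (Fin N), Finset (Fin N)))
      (fun x => (x.1 ∪ x.2, A \ x.2)) ?_ ?_ ?_ ?_ ?_
    · intro p hp
      simp only [mem_filter, mem_univ, true_and] at hp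
      have hp' : ∀ y, y ∈ p.1 ∨ y ∈ p.2 ↔ y ∈ A := by
        intro y; rw [← hp]; simp [mem_union]
      simp only [mem_sigma, mem_powerset]
      constructor
      · intro y hy; simp only [mem_inter] at hy; exact (hp' y).1 (Or.inl hy.1)
      · intro y hy
        simp only [mem_sdiff, mem_inter] at hy ⊢
        exact ⟨hy.1, fun hc => hy.2 hc.2⟩
    · intro x hx
      simp only [mem_sigma, mem_powerset] at hx
      obtain ⟨hx1, hx2⟩ := hx
      simp only [mem_filter, mem_univ, true_and]
      ext y
      simp only [mem_union, mem_sdiff]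
      constructor
      · rintro ((h | h) | h)
        · exact hx1 h
        · exact (mem_sdiff.1 (hx2 h)).1
        · exact h.1
      · intro hyA
        by_cases hy2 : y ∈ x.2
        · exact Or.inl (Or.inr hy2)
        · exact Or.inr ⟨hyA, hy2⟩
    · intro p hp
      simp only [mem_filter, mem_univ, true_and] at hp
      have hp' : ∀ y, y ∈ p.1 ∨ y ∈ p.2 ↔ y ∈ A := by
        intro y; rw [← hp]; simp [mem_union]
      have e1 : (p.1 ∩ p.2) ∪ (A \ p.2) = p.1 := by
        ext y
        have := hp' y
        simp only [mem_union, mem_inter, mem_sdiff]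
        tauto
      have e2 : A \ (A \ p.2) = p.2 := by
        ext y
        have := hp' y
        simp only [mem_sdiff]
        tauto
      simp only [e1, e2]
    · intro x hx
      simp only [mem_sigma, mem_powerset] at hx
      obtain ⟨hx1, hx2⟩ := hx
      have h1 : ∀ y, y ∈ x.1 → y ∈ A := fun y hy => hx1 hy
      have h2 : ∀ y, y ∈ x.2 → y ∈ A ∧ y ∉ x.1 := fun y hy => mem_sdiff.1 (hx2 hy)
      have e3 : (x.1 ∪ x.2) ∩ (A \ x.2) = x.1 := by
        ext y
        have := h1 y
        have := h2 y
        simp only [mem_inter, mem_union, mem_sdiff]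
        tauto
      have e4 : A \ (A \ x.2) = x.2 := by
        ext y
        have := h1 y
        have := h2 y
        simp only [mem_sdiff]
        tauto
      obtain ⟨x1, x2⟩ := x
      simp only at e3 e4 ⊢
      rw [e3, e4]
    · intro p hp
      simp only [mem_filter, mem_univ, true_and] at hp
      have hp' : ∀ y, y ∈ p.1 ∨ y ∈ p.2 ↔ y ∈ A := by
        intro y; rw [← hp]; simp [mem_union]
      have e1 : (p.1 ∩ p.2) ∪ (A \ p.2) = p.1 := by
        ext y; have := hp' y
        simp only [mem_union, mem_inter, mem_sdiff]; tauto
      have hdisj : Disjoint (p.1 ∩ p.2) (A \ p.2) := by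
        rw [Finset.disjoint_left]
        intro y hy1 hy2
        simp only [mem_inter] at hy1
        simp only [mem_sdiff] at hy2
        exact hy2.2 hy1.2
      have hc1 : p.1.card = (p.1 ∩ p.2).card + (A \ p.2).card := by
        rw [← card_union_of_disjoint hdisj, e1]
      have hsub2 : p.2 ⊆ A := by
        intro y hy; exact (hp' y).1 (Or.inr hy)
      have hc2 : (A \ p.2).card = M - p.2.card := card_sdiff_of_subset hsub2
      have hle2 : p.2.card ≤ M := card_le_card hsub2
      have harg1 : p.1.card + p.2.card - M = (p.1 ∩ p.2).card := by omega
      have harg2 : (p.1 ∩ p.2).card + (A \ p.2).card = p.1.card := hc1.symm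
      have harg3 : M - (A \ p.2).card = p.2.card := by omega
      rw [harg1, harg2, harg3]
  rw [step1, Finset.sum_sigma]
  -- Step 2: group the (I, J) sum by cardinalities
  have step2 : ∑ I ∈ A.powerset, ∑ J ∈ (A \ I).powerset,
        lam ^ I.card * a (I.card + J.card) * b (M - J.card)
      = ∑ i ∈ range (M + 1), ∑ j ∈ range (M - i + 1),
          (M.choose i : ℝ) * ((M - i).choose j : ℝ) * (lam ^ i * a (i + j) * b (M - j)) := by
    rw [Finset.sum_powerset]
    refine Finset.sum_congr rfl ?_
    intro i hi
    rw [mem_range] at hi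
    have : ∀ I ∈ powersetCard i A, (∑ J ∈ (A \ I).powerset,
        lam ^ I.card * a (I.card + J.card) * b (M - J.card))
        = ∑ j ∈ range (M - i + 1), ((M - i).choose j : ℝ) * (lam ^ i * a (i + j) * b (M - j)) := by
      intro I hI
      rw [mem_powersetCard] at hI
      obtain ⟨hIA, hIc⟩ := hI
      have hcd : (A \ I).card = M - i := by rw [card_sdiff_of_subset hIA, hIc]
      rw [Finset.sum_powerset, hcd]
      refine Finset.sum_congr rfl ?_
      intro j hj
      have : ∀ J ∈ powersetCard j (A \ I),
          lam ^ I.card * a (I.card + J.card) * b (M - J.card)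
          = lam ^ i * a (i + j) * b (M - j) := by
        intro J hJ
        rw [mem_powersetCard] at hJ
        rw [hJ.2, hIc]
      rw [Finset.sum_congr rfl this, Finset.sum_const, card_powersetCard, hcd, nsmul_eq_mul]
    rw [Finset.sum_congr rfl this, Finset.sum_const, card_powersetCard, hM, nsmul_eq_mul,
      Finset.mul_sum]
    refine Finset.sum_congr rfl ?_
    intro j hj
    rw [← hM]
    ring
  rw [step2]
  -- Step 3: the defining antidiagonal sum equals the same range sum
  show (∑ p ∈ Finset.HasAntidiagonal.antidiagonal M, ∑ q ∈ Finset.HasAntidiagonal.antidiagonal p.2,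
    lam ^ p.1 * ((Nat.factorial M : ℝ) /
      ((Nat.factorial p.1 : ℝ) * (Nat.factorial q.1 : ℝ) * (Nat.factorial q.2 : ℝ))) *
      a (p.1 + q.1) * b (p.1 + q.2)) = _
  rw [Finset.Nat.sum_antidiagonal_eq_sum_range_succ_mk]
  refine Finset.sum_congr rfl ?_
  intro i hi
  rw [mem_range] at hi
  have hi' : i ≤ M := by omega
  rw [Finset.Nat.sum_antidiagonal_eq_sum_range_succ_mk]
  refine Finset.sum_congr rfl ?_
  intro j hj
  rw [mem_range] at hj
  have hj' : j ≤ M - i := by omega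
  have harg : i + (M - i - j) = M - j := by omega
  rw [harg, coeff_eq hi' hj']
  ring

private lemma biUnion_last {N j : ℕ} (T : Fin (j + 1) → Finset (Fin N)) :
    (Finset.univ.biUnion T)
      = (Finset.univ.biUnion (fun i : Fin j => T i.castSucc)) ∪ T (Fin.last j) := by
  ext x
  simp only [mem_biUnion, mem_union, mem_univ, true_and]
  constructor
  · rintro ⟨i, hi⟩
    rcases Fin.eq_castSucc_or_eq_last i with ⟨i', rfl⟩ | rfl
    · exact Or.inl ⟨i', hi⟩
    · exact Or.inr hi
  · rintro (⟨i, hi⟩ | h)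
    · exact ⟨i.castSucc, hi⟩
    · exact ⟨Fin.last j, h⟩

/-- Generalized product formula over an arbitrary finset `A`. -/
lemma starIter_cover {N : ℕ} (lam : ℝ) (f : ℕ → ℕ → ℝ) :
    ∀ (j : ℕ) (A : Finset (Fin N)),
    starIter lam f j A.card =
      ∑ T ∈ Finset.univ.filter (fun T : Fin (j + 1) → Finset (Fin N) =>
          Finset.univ.biUnion T = A),
        lam ^ ((∑ i, (T i).card) - A.card) * ∏ i : Fin (j + 1), f (i : ℕ) ((T i).card) := by
  intro j
  induction j with
  | zero =>
    intro A
    have hset : Finset.univ.filter (fun T : Fin 1 → Finset (Fin N) =>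
        Finset.univ.biUnion T = A) = {fun _ => A} := by
      ext T
      simp only [mem_filter, mem_univ, true_and, mem_singleton]
      have huniv : (Finset.univ : Finset (Fin 1)) = {0} := rfl
      rw [huniv, Finset.singleton_biUnion]
      constructor
      · intro h; funext i; rw [Fin.fin_one_eq_zero i, h]
      · intro h; rw [h]
    rw [hset, Finset.sum_singleton]
    simp [starIter, Fin.sum_univ_one, Fin.prod_univ_one]
  | succ j ih =>
    intro A
    have hrw : starIter lam f (j + 1) A.card
        = starMul lam (starIter lam f j) (f (j + 1)) A.card := rfl
    rw [hrw, starMul_cover]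
    have hmap : ∀ T ∈ Finset.univ.filter (fun T : Fin (j + 1 + 1) → Finset (Fin N) =>
        Finset.univ.biUnion T = A),
        ((Finset.univ.biUnion (fun i : Fin (j + 1) => T i.castSucc), T (Fin.last (j + 1)))
          : Finset (Fin N) × Finset (Fin N)) ∈
          Finset.univ.filter (fun p : Finset (Fin N) × Finset (Fin N) => p.1 ∪ p.2 = A) := by
      intro T hT
      simp only [mem_filter, mem_univ, true_and] at hT ⊢
      rw [← biUnion_last, hT]
    rw [← Finset.sum_fiberwise_of_maps_to hmap]
    refine Finset.sum_congr rfl ?_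
    intro p hp
    simp only [mem_filter, mem_univ, true_and] at hp
    -- inner sum: bijection with tuples S : Fin (j+1) → Finset (Fin N), ⋃ S = p.1
    rw [ih p.1, Finset.mul_sum, Finset.sum_mul]
    refine Finset.sum_nbij' (fun S => Fin.snoc S p.2) (fun T => Fin.init T) ?_ ?_ ?_ ?_ ?_
    · intro S hS
      simp only [mem_filter, mem_univ, true_and] at hS ⊢
      have h1 : (fun i : Fin (j + 1) =>
          (Fin.snoc S p.2 : Fin (j + 1 + 1) → Finset (Fin N)) i.castSucc) = S := by
        funext i; simp [Fin.snoc_castSucc]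
      have h2 : (Fin.snoc S p.2 : Fin (j + 1 + 1) → Finset (Fin N)) (Fin.last (j + 1)) = p.2 :=
        Fin.snoc_last _ _
      have h3 : (Finset.univ.biUnion fun i : Fin (j + 1) =>
          (Fin.snoc S p.2 : Fin (j + 1 + 1) → Finset (Fin N)) i.castSucc)
          = p.1 := by rw [h1, hS]
      constructor
      · rw [biUnion_last, h2, h3, hp]
      · rw [Prod.mk.injEq, h2, h3]
        exact ⟨rfl, rfl⟩
    · intro T hT
      simp only [mem_filter, mem_univ, true_and] at hT ⊢
      have h := hT.2
      rw [Prod.mk.injEq] at h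
      rw [← h.1]
      rfl
    · intro S hS
      simp
    · intro T hT
      simp only [mem_filter, mem_univ, true_and] at hT
      have h2 := hT.2
      rw [Prod.mk.injEq] at h2
      rw [← h2.2]
      exact Fin.snoc_init_self T
    · intro S hS
      simp only [mem_filter, mem_univ, true_and] at hS
      have hsum : (∑ i : Fin (j + 1 + 1), ((Fin.snoc S p.2 : Fin (j + 1 + 1) → Finset (Fin N)) i).card)
          = (∑ i : Fin (j + 1), (S i).card) + p.2.card := by
        rw [Fin.sum_univ_castSucc]
        simp [Fin.snoc_castSucc, Fin.snoc_last]
      have hprod : (∏ i : Fin (j + 1 + 1),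
            f (i : ℕ) (((Fin.snoc S p.2 : Fin (j + 1 + 1) → Finset (Fin N)) i).card))
          = (∏ i : Fin (j + 1), f (i : ℕ) ((S i).card)) * f (j + 1) p.2.card := by
        rw [Fin.prod_univ_castSucc]
        simp [Fin.snoc_castSucc, Fin.snoc_last]
      have hXle : p.1.card ≤ ∑ i : Fin (j + 1), (S i).card := by
        rw [← hS]
        exact card_biUnion_le
      have hAle : A.card ≤ p.1.card + p.2.card := by
        rw [← hp]
        exact card_union_le _ _
      have hexp : lam ^ (((∑ i : Fin (j + 1), (S i).card) + p.2.card) - A.card)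
          = lam ^ (p.1.card + p.2.card - A.card)
              * lam ^ ((∑ i : Fin (j + 1), (S i).card) - p.1.card) := by
        rw [← pow_add]
        congr 1
        omega
      rw [hsum, hprod, hexp]
      ring

/-- Generalized Product Formula: for `k ≥ 1` functions `f 0, …, f (k-1) : ℕ → ℝ`, the
left-associated iterated product `(⋯(f 0 ⋆ f 1) ⋆ ⋯) ⋆ f (k-1)` evaluated at `n`
equals the sum over all `k`-tuples `(T₁, …, T_k)` of (not necessarily disjoint)
subsets of `[n]` with union `[n]` of `lam^{(#T₁+⋯+#T_k) − n} · f₁(#T₁) ⋯ f_k(#T_k)`. -/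
theorem stmt3 (lam : ℝ) (k : ℕ) (hk : 1 ≤ k) (f : ℕ → ℕ → ℝ) (n : ℕ) :
    starIter lam f (k - 1) n =
      ∑ T ∈ Finset.univ.filter (fun T : Fin k → Finset (Fin n) =>
          Finset.univ.biUnion T = Finset.univ),
        lam ^ ((∑ i, (T i).card) - n) * ∏ i : Fin k, f (i : ℕ) ((T i).card) := by
  obtain ⟨j, rfl⟩ : ∃ j, k = j + 1 := ⟨k - 1, by omega⟩
  have hcard : (Finset.univ : Finset (Fin n)).card = n := by simp
  have := starIter_cover lam f j (Finset.univ : Finset (Fin n))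
  rw [hcard] at this
  simpa using this
end

section
/- Fix λ ∈ ℝ and n ≥ 1. Let δ₁^{⋆n} denote the n-fold left-associated ⋆-product δ₁ ⋆ δ₁ ⋆ ⋯ ⋆ δ₁ (n factors). Then for every m ≤ n one has δ₁^{⋆n}(m) = m! · S(n,m) · λ^{n−m}, and δ₁^{⋆n}(m) = 0 for m > n. -/
/-- The left-associated `n`-fold `⋆`-power `a ⋆ a ⋆ ⋯ ⋆ a` (`n` factors, `n ≥ 1`);
the value at `0` is set to `δ₀` by convention. -/
noncomputable def starPow (lam : ℝ) (a : ℕ → ℝ) : ℕ → ℕ → ℝ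
  | 0 => delta 0
  | 1 => a
  | n + 2 => starMul lam (starPow lam a (n + 1)) a

/-- The Stirling number of the second kind `S(n,k)`: the number of partitions of an
`n`-element set into `k` nonempty pairwise disjoint blocks. -/
def stirling2 (n k : ℕ) : ℕ :=
  (Finset.univ.filter (fun π : Finset (Finset (Fin n)) =>
    π.card = k ∧ (∀ B ∈ π, B.Nonempty) ∧
    (∀ B ∈ π, ∀ C ∈ π, B ≠ C → Disjoint B C) ∧
    π.biUnion id = Finset.univ)).card


section Aux

open Finset

variable {α : Type*} [DecidableEq α] [Fintype α]

/-- Finset of partitions of `s` into `k` blocks. -/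
def myParts (s : Finset α) (k : ℕ) : Finset (Finset (Finset α)) :=
  Finset.univ.filter (fun π : Finset (Finset α) =>
    π.card = k ∧ (∀ B ∈ π, B.Nonempty) ∧
    (∀ B ∈ π, ∀ C ∈ π, B ≠ C → Disjoint B C) ∧
    π.biUnion id = s)

lemma mem_myParts {s : Finset α} {k : ℕ} {π : Finset (Finset α)} :
    π ∈ myParts s k ↔ π.card = k ∧ (∀ B ∈ π, B.Nonempty) ∧
      (∀ B ∈ π, ∀ C ∈ π, B ≠ C → Disjoint B C) ∧ π.biUnion id = s := by
  simp [myParts]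


/-- vanishing: more blocks than elements -/
lemma myParts_eq_empty {s : Finset α} {k : ℕ} (h : s.card < k) : myParts s k = ∅ := by
  rw [Finset.eq_empty_iff_forall_notMem]
  intro π hπ
  rw [mem_myParts] at hπ
  obtain ⟨hcard, hne, hdisj, hcov⟩ := hπ
  have h1 : s.card = ∑ B ∈ π, B.card := by
    rw [← hcov]; exact Finset.card_biUnion hdisj
  have h2 : π.card ≤ ∑ B ∈ π, B.card := by
    calc π.card = ∑ _B ∈ π, 1 := by simp
    _ ≤ ∑ B ∈ π, B.card := Finset.sum_le_sum fun B hB => Finset.card_pos.mpr (hne B hB)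
  omega

lemma myParts_zero {s : Finset α} (h : s.Nonempty) : myParts s 0 = ∅ := by
  rw [Finset.eq_empty_iff_forall_notMem]
  intro π hπ
  rw [mem_myParts] at hπ
  obtain ⟨hcard, -, -, hcov⟩ := hπ
  rw [Finset.card_eq_zero] at hcard
  subst hcard
  simp at hcov
  rw [← hcov] at h
  exact Finset.not_nonempty_empty h

lemma block_subset {s : Finset α} {k : ℕ} {π : Finset (Finset α)} (hπ : π ∈ myParts s k)
    {B : Finset α} (hB : B ∈ π) : B ⊆ s := by
  rw [mem_myParts] at hπ
  rw [← hπ.2.2.2]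
  intro x hx
  exact Finset.mem_biUnion.mpr ⟨B, hB, hx⟩

lemma myParts_image_card {β : Type*} [DecidableEq β] [Fintype β] (f : α → β)
    (hf : Function.Injective f) (s : Finset α) (k : ℕ) :
    (myParts (s.image f) k).card = (myParts s k).card := by
  symm
  apply Finset.card_bij (fun π _ => π.image (Finset.image f))
  · -- maps to
    intro π hπ
    rw [mem_myParts] at hπ ⊢
    obtain ⟨hcard, hne, hdisj, hcov⟩ := hπ
    refine ⟨?_, ?_, ?_, ?_⟩
    · rw [Finset.card_image_of_injective _ (Finset.image_injective hf), hcard]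
    · rintro B hB
      obtain ⟨B₀, hB₀, rfl⟩ := Finset.mem_image.mp hB
      exact (hne B₀ hB₀).image f
    · rintro B hB C hC hBC
      obtain ⟨B₀, hB₀, rfl⟩ := Finset.mem_image.mp hB
      obtain ⟨C₀, hC₀, rfl⟩ := Finset.mem_image.mp hC
      have : B₀ ≠ C₀ := fun h => hBC (by rw [h])
      exact (Finset.disjoint_image hf).mpr (hdisj B₀ hB₀ C₀ hC₀ this)
    · rw [Finset.image_biUnion, ← hcov]
      simp [Finset.biUnion_image]
  · -- inj
    intro π₁ h₁ π₂ h₂ h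
    exact Finset.image_injective (Finset.image_injective hf) h
  · -- surj
    intro σ hσ
    rw [mem_myParts] at hσ
    obtain ⟨hcard, hne, hdisj, hcov⟩ := hσ
    have hsub : ∀ B ∈ σ, B ⊆ s.image f := by
      intro B hB x hx
      rw [← hcov]
      exact Finset.mem_biUnion.mpr ⟨B, hB, hx⟩
    set pre : Finset β → Finset α := fun B => Finset.univ.filter (fun a => f a ∈ B) with hpre
    have hFpre : ∀ B ∈ σ, (pre B).image f = B := by
      intro B hB
      ext b
      simp only [hpre, Finset.mem_image, Finset.mem_filter, Finset.mem_univ, true_and]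
      constructor
      · rintro ⟨x, hx, rfl⟩; exact hx
      · intro hb
        obtain ⟨x, -, rfl⟩ := Finset.mem_image.mp (hsub B hB hb)
        exact ⟨x, hb, rfl⟩
    refine ⟨σ.image pre, ?_, ?_⟩
    · rw [mem_myParts]
      have hpreinj : Set.InjOn pre σ := by
        intro B hB C hC h
        rw [← hFpre B hB, ← hFpre C hC, h]
      refine ⟨?_, ?_, ?_, ?_⟩
      · rw [Finset.card_image_of_injOn hpreinj, hcard]
      · rintro B hB
        obtain ⟨B₀, hB₀, rfl⟩ := Finset.mem_image.mp hB
        obtain ⟨b, hb⟩ := hne B₀ hB₀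
        obtain ⟨x, -, rfl⟩ := Finset.mem_image.mp (hsub B₀ hB₀ hb)
        exact ⟨x, by simp [hpre, hb]⟩
      · rintro B hB C hC hBC
        obtain ⟨B₀, hB₀, rfl⟩ := Finset.mem_image.mp hB
        obtain ⟨C₀, hC₀, rfl⟩ := Finset.mem_image.mp hC
        have hne' : B₀ ≠ C₀ := fun h => hBC (by rw [h])
        have := hdisj B₀ hB₀ C₀ hC₀ hne'
        rw [Finset.disjoint_left] at this ⊢
        intro x hx hx'
        simp only [hpre, Finset.mem_filter, Finset.mem_univ, true_and] at hx hx'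
        exact this hx hx'
      · ext x
        rw [Finset.mem_biUnion]
        constructor
        · rintro ⟨B, hB, hx⟩
          obtain ⟨B₀, hB₀, rfl⟩ := Finset.mem_image.mp hB
          simp only [hpre, id, Finset.mem_filter, Finset.mem_univ, true_and] at hx
          have : f x ∈ s.image f := hsub B₀ hB₀ hx
          obtain ⟨y, hy, hyx⟩ := Finset.mem_image.mp this
          rwa [← hf hyx]
        · intro hx
          have : f x ∈ s.image f := Finset.mem_image_of_mem f hx
          rw [← hcov, Finset.mem_biUnion] at this
          obtain ⟨B, hB, hfx⟩ := this
          exact ⟨pre B, Finset.mem_image_of_mem pre hB, by simpa [hpre] using hfx⟩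
    · rw [Finset.image_image]
      rw [show σ.image ((Finset.image f) ∘ pre) = σ.image id from
        Finset.image_congr fun B hB => hFpre B hB]
      simp

lemma myParts_insert_card (a : α) (s : Finset α) (ha : a ∉ s) (k : ℕ) :
    (myParts (insert a s) (k+1)).card
      = (myParts s k).card + (k+1) * (myParts s (k+1)).card := by
  classical
  rw [← Finset.card_filter_add_card_filter_not
    (s := myParts (insert a s) (k+1)) (fun π => {a} ∈ π)]
  congr 1
  · -- singleton {a} blocks ↔ partitions of s into k blocks
    apply Finset.card_bij (fun π _ => π.erase {a})
    · intro π hπ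
      rw [Finset.mem_filter] at hπ
      obtain ⟨hπ, hsing⟩ := hπ
      have hblk := fun {B} hB => block_subset hπ (B := B) hB
      rw [mem_myParts] at hπ ⊢
      obtain ⟨hcard, hne, hdisj, hcov⟩ := hπ
      have hanotin : ∀ B ∈ π, B ≠ {a} → a ∉ B := by
        intro B hB hBne haB
        exact Finset.disjoint_left.mp (hdisj {a} hsing B hB (Ne.symm hBne))
          (Finset.mem_singleton_self a) haB
      refine ⟨?_, ?_, ?_, ?_⟩
      · rw [Finset.card_erase_of_mem hsing, hcard]; omega
      · exact fun B hB => hne B (Finset.mem_of_mem_erase hB)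
      · exact fun B hB C hC h => hdisj B (Finset.mem_of_mem_erase hB)
          C (Finset.mem_of_mem_erase hC) h
      · ext x
        rw [Finset.mem_biUnion]
        constructor
        · rintro ⟨B, hB, hx⟩
          have hBπ := Finset.mem_of_mem_erase hB
          have hBne := Finset.ne_of_mem_erase hB
          have hxa : x ≠ a := fun h => hanotin B hBπ hBne (h ▸ hx)
          have := hblk hBπ hx
          rw [Finset.mem_insert] at this
          tauto
        · intro hx
          have hxa : x ≠ a := fun h => ha (h ▸ hx)
          have : x ∈ π.biUnion id := hcov ▸ Finset.mem_insert_of_mem hx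
          rw [Finset.mem_biUnion] at this
          obtain ⟨B, hB, hxB⟩ := this
          refine ⟨B, Finset.mem_erase.mpr ⟨?_, hB⟩, hxB⟩
          rintro rfl
          exact hxa (Finset.mem_singleton.mp hxB)
    · intro π₁ h₁ π₂ h₂ h
      rw [Finset.mem_filter] at h₁ h₂
      rw [← Finset.insert_erase h₁.2, ← Finset.insert_erase h₂.2, h]
    · intro σ hσ
      have hblk := fun {B} hB => block_subset hσ (B := B) hB
      rw [mem_myParts] at hσ
      obtain ⟨hcard, hne, hdisj, hcov⟩ := hσ
      have hanot : ∀ B ∈ σ, a ∉ B := fun B hB haB => ha (hblk hB haB)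
      have hsnot : {a} ∉ σ := fun h => hanot {a} h (Finset.mem_singleton_self a)
      refine ⟨insert {a} σ, ?_, Finset.erase_insert hsnot⟩
      rw [Finset.mem_filter, mem_myParts]
      refine ⟨⟨?_, ?_, ?_, ?_⟩, Finset.mem_insert_self _ _⟩
      · rw [Finset.card_insert_of_notMem hsnot, hcard]
      · intro B hB
        rcases Finset.mem_insert.mp hB with rfl | hB
        · exact Finset.singleton_nonempty a
        · exact hne B hB
      · intro B hB C hC hBC
        rcases Finset.mem_insert.mp hB with rfl | hB <;>
          rcases Finset.mem_insert.mp hC with rfl | hC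
        · exact absurd rfl hBC
        · exact Finset.disjoint_singleton_left.mpr (hanot C hC)
        · exact Finset.disjoint_singleton_right.mpr (hanot B hB)
        · exact hdisj B hB C hC hBC
      · rw [Finset.biUnion_insert, hcov]
        simp [Finset.insert_eq, -Finset.singleton_union]
  · -- no singleton {a}: bijection with pairs (σ, B₀)
    have hsig : ((myParts s (k+1)).sigma (fun σ => σ)).card
        = (k+1) * (myParts s (k+1)).card := by
      rw [Finset.card_sigma]
      rw [Finset.sum_congr rfl (fun σ hσ => (mem_myParts.mp hσ).1)]
      rw [Finset.sum_const, smul_eq_mul, mul_comm]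
    rw [← hsig]
    symm
    apply Finset.card_bij (fun p _ => insert (insert a p.2) (p.1.erase p.2))
    · rintro ⟨σ, B₀⟩ hp
      rw [Finset.mem_sigma] at hp
      obtain ⟨hσ, hB₀⟩ := hp
      dsimp only at hσ hB₀ ⊢
      have hblk := fun {B} hB => block_subset hσ (B := B) hB
      rw [mem_myParts] at hσ
      obtain ⟨hcard, hne, hdisj, hcov⟩ := hσ
      have hanot : ∀ B ∈ σ, a ∉ B := fun B hB haB => ha (hblk hB haB)
      have hXnot : insert a B₀ ∉ σ.erase B₀ := fun h =>
        hanot _ (Finset.mem_of_mem_erase h) (Finset.mem_insert_self a B₀)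
      rw [Finset.mem_filter, mem_myParts]
      refine ⟨⟨?_, ?_, ?_, ?_⟩, ?_⟩
      · rw [Finset.card_insert_of_notMem hXnot, Finset.card_erase_of_mem hB₀, hcard]
        omega
      · intro B hB
        rcases Finset.mem_insert.mp hB with rfl | hB
        · exact Finset.insert_nonempty a B₀
        · exact hne B (Finset.mem_of_mem_erase hB)
      · intro B hB C hC hBC
        rcases Finset.mem_insert.mp hB with rfl | hB <;>
          rcases Finset.mem_insert.mp hC with rfl | hC
        · exact absurd rfl hBC
        · refine Finset.disjoint_insert_left.mpr
            ⟨hanot C (Finset.mem_of_mem_erase hC), ?_⟩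
          exact hdisj B₀ hB₀ C (Finset.mem_of_mem_erase hC)
            (Ne.symm (Finset.ne_of_mem_erase hC))
        · refine Finset.disjoint_insert_right.mpr
            ⟨hanot B (Finset.mem_of_mem_erase hB), ?_⟩
          exact hdisj B (Finset.mem_of_mem_erase hB) B₀ hB₀
            (Finset.ne_of_mem_erase hB)
        · exact hdisj B (Finset.mem_of_mem_erase hB) C (Finset.mem_of_mem_erase hC) hBC
      · rw [Finset.biUnion_insert]
        have : s = B₀ ∪ (σ.erase B₀).biUnion id := by
          rw [← hcov]
          conv_lhs => rw [← Finset.insert_erase hB₀]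
          rw [Finset.biUnion_insert]
          rfl
        rw [this, id, Finset.insert_union]
      · intro hmem
        rcases Finset.mem_insert.mp hmem with heq | hmem
        · obtain ⟨x, hx⟩ := hne B₀ hB₀
          have : x ∈ ({a} : Finset α) := heq ▸ Finset.mem_insert_of_mem hx
          rw [Finset.mem_singleton] at this
          exact hanot B₀ hB₀ (this ▸ hx)
        · exact hanot {a} (Finset.mem_of_mem_erase hmem) (Finset.mem_singleton_self a)
    · rintro ⟨σ, B₀⟩ h₁ ⟨σ', B₀'⟩ h₂ h
      rw [Finset.mem_sigma] at h₁ h₂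
      obtain ⟨hσ, hB₀⟩ := h₁
      obtain ⟨hσ', hB₀'⟩ := h₂
      dsimp only at hσ hB₀ hσ' hB₀' h
      have hanot : ∀ B ∈ σ, a ∉ B := fun B hB haB => ha (block_subset hσ hB haB)
      have hanot' : ∀ B ∈ σ', a ∉ B := fun B hB haB => ha (block_subset hσ' hB haB)
      have hXnot : insert a B₀ ∉ σ.erase B₀ := fun hh =>
        hanot _ (Finset.mem_of_mem_erase hh) (Finset.mem_insert_self a B₀)
      have hXnot' : insert a B₀' ∉ σ'.erase B₀' := fun hh =>
        hanot' _ (Finset.mem_of_mem_erase hh) (Finset.mem_insert_self a B₀')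
      have hXX : insert a B₀ = insert a B₀' := by
        have : insert a B₀ ∈ insert (insert a B₀') (σ'.erase B₀') := by
          rw [← h]; exact Finset.mem_insert_self _ _
        rcases Finset.mem_insert.mp this with heq | hmem
        · exact heq
        · exact absurd (Finset.mem_insert_self a B₀)
            (hanot' _ (Finset.mem_of_mem_erase hmem))
      have hBB : B₀ = B₀' := by
        have h1 : (insert a B₀).erase a = B₀ := Finset.erase_insert (hanot B₀ hB₀)
        have h2 : (insert a B₀').erase a = B₀' := Finset.erase_insert (hanot' B₀' hB₀')
        rw [← h1, ← h2, hXX]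
      have hσσ : σ = σ' := by
        have he : σ.erase B₀ = σ'.erase B₀' := by
          have e1 : (insert (insert a B₀) (σ.erase B₀)).erase (insert a B₀)
              = σ.erase B₀ := Finset.erase_insert hXnot
          have e2 : (insert (insert a B₀') (σ'.erase B₀')).erase (insert a B₀')
              = σ'.erase B₀' := Finset.erase_insert hXnot'
          rw [← e1, ← e2, h, hXX]
        rw [← Finset.insert_erase hB₀, ← Finset.insert_erase hB₀', he, hBB]
      subst hσσ; subst hBB; rfl
    · intro π hπ
      rw [Finset.mem_filter] at hπ
      obtain ⟨hπ, hsing⟩ := hπ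
      have hblk := fun {B} hB => block_subset hπ (B := B) hB
      rw [mem_myParts] at hπ
      obtain ⟨hcard, hne, hdisj, hcov⟩ := hπ
      have haU : a ∈ π.biUnion id := hcov ▸ Finset.mem_insert_self a s
      rw [Finset.mem_biUnion] at haU
      obtain ⟨B, hB, haB⟩ := haU
      rw [id_eq] at haB
      have hBne : B ≠ {a} := fun h => hsing (h ▸ hB)
      have haonly : ∀ C ∈ π, C ≠ B → a ∉ C := by
        intro C hC hCB haC
        exact Finset.disjoint_left.mp (hdisj C hC B hB hCB) haC haB
      set B₀ := B.erase a with hB₀def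
      have hB₀ne : B₀.Nonempty := by
        by_contra hcon
        rw [Finset.not_nonempty_iff_eq_empty, Finset.erase_eq_empty_iff] at hcon
        rcases hcon with h | h
        · exact (hne B hB).ne_empty h
        · exact hBne h
      have hB₀sub : B₀ ⊆ s := by
        intro x hx
        rw [Finset.mem_erase] at hx
        rcases Finset.mem_insert.mp (hblk hB hx.2) with h | h
        · exact absurd h hx.1
        · exact h
      have hothers : ∀ C ∈ π.erase B, C ⊆ s := by
        intro C hC x hx
        have hCa : a ∉ C := haonly C (Finset.mem_of_mem_erase hC) (Finset.ne_of_mem_erase hC)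
        rcases Finset.mem_insert.mp (hblk (Finset.mem_of_mem_erase hC) hx) with h | h
        · exact absurd (h ▸ hx) hCa
        · exact h
      have hB₀notin : B₀ ∉ π.erase B := by
        intro hcon
        obtain ⟨x, hx⟩ := hB₀ne
        exact Finset.disjoint_left.mp
          (hdisj B₀ (Finset.mem_of_mem_erase hcon) B hB (Finset.ne_of_mem_erase hcon))
          hx (Finset.mem_of_mem_erase hx)
      refine ⟨⟨insert B₀ (π.erase B), B₀⟩, ?_, ?_⟩
      · rw [Finset.mem_sigma]
        constructor
        · rw [mem_myParts]
          refine ⟨?_, ?_, ?_, ?_⟩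
          · rw [Finset.card_insert_of_notMem hB₀notin, Finset.card_erase_of_mem hB, hcard]
            omega
          · intro C hC
            rcases Finset.mem_insert.mp hC with rfl | hC
            · exact hB₀ne
            · exact hne C (Finset.mem_of_mem_erase hC)
          · intro C hC D hD hCD
            rcases Finset.mem_insert.mp hC with rfl | hC <;>
              rcases Finset.mem_insert.mp hD with rfl | hD
            · exact absurd rfl hCD
            · exact (hdisj B hB D (Finset.mem_of_mem_erase hD)
                (Ne.symm (Finset.ne_of_mem_erase hD))).mono_left (Finset.erase_subset a B)
            · exact (hdisj C (Finset.mem_of_mem_erase hC) B hB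
                (Finset.ne_of_mem_erase hC)).mono_right (Finset.erase_subset a B)
            · exact hdisj C (Finset.mem_of_mem_erase hC) D (Finset.mem_of_mem_erase hD) hCD
          · rw [Finset.biUnion_insert]
            apply Finset.Subset.antisymm
            · intro x hx
              rcases Finset.mem_union.mp hx with h | h
              · exact hB₀sub h
              · rw [Finset.mem_biUnion] at h
                obtain ⟨C, hC, hxC⟩ := h
                exact hothers C hC hxC
            · intro x hx
              have hxa : x ≠ a := fun h => ha (h ▸ hx)
              have : x ∈ π.biUnion id := hcov ▸ Finset.mem_insert_of_mem hx
              rw [Finset.mem_biUnion] at this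
              obtain ⟨C, hC, hxC⟩ := this
              by_cases hCB : C = B
              · subst hCB
                exact Finset.mem_union_left _ (Finset.mem_erase.mpr ⟨hxa, hxC⟩)
              · exact Finset.mem_union_right _
                  (Finset.mem_biUnion.mpr ⟨C, Finset.mem_erase.mpr ⟨hCB, hC⟩, hxC⟩)
        · exact Finset.mem_insert_self _ _
      · show insert (insert a B₀) ((insert B₀ (π.erase B)).erase B₀) = π
        rw [Finset.erase_insert hB₀notin, hB₀def, Finset.insert_erase haB,
          Finset.insert_erase hB]


end Aux

section Aux2

open Finset

lemma stirling2_eq (n k : ℕ) : stirling2 n k = (myParts (univ : Finset (Fin n)) k).card := rfl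

lemma stirling2_eq_zero {n k : ℕ} (h : n < k) : stirling2 n k = 0 := by
  rw [stirling2_eq, myParts_eq_empty (by simpa using h), Finset.card_empty]

lemma stirling2_zero {n : ℕ} (h : 1 ≤ n) : stirling2 n 0 = 0 := by
  have : Nonempty (Fin n) := ⟨⟨0, h⟩⟩
  rw [stirling2_eq, myParts_zero Finset.univ_nonempty, Finset.card_empty]

lemma stirling2_succ (n k : ℕ) :
    stirling2 (n+1) (k+1) = stirling2 n k + (k+1) * stirling2 n (k+1) := by
  have hinj : Function.Injective (Fin.castSucc : Fin n → Fin (n+1)) :=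
    Fin.castSucc_injective n
  have huniv : (univ : Finset (Fin (n+1)))
      = insert (Fin.last n) ((univ : Finset (Fin n)).image Fin.castSucc) := by
    ext x
    simp only [Finset.mem_univ, true_iff, Finset.mem_insert, Finset.mem_image,
      Finset.mem_univ, true_and]
    rcases eq_or_ne x (Fin.last n) with rfl | h
    · exact Or.inl rfl
    · exact Or.inr ⟨x.castPred h, Fin.castSucc_castPred x h⟩
  have hnot : Fin.last n ∉ (univ : Finset (Fin n)).image Fin.castSucc := by
    simp only [Finset.mem_image, Finset.mem_univ, true_and, not_exists]
    intro y
    exact (Fin.castSucc_lt_last y).ne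
  rw [stirling2_eq, stirling2_eq, stirling2_eq, huniv,
    myParts_insert_card _ _ hnot k,
    myParts_image_card _ hinj, myParts_image_card _ hinj]

lemma starMul_delta_one_zero (lam : ℝ) (f : ℕ → ℝ) :
    starMul lam f (delta 1) 0 = 0 := by
  simp [starMul, delta]

lemma starMul_delta_one (lam : ℝ) (f : ℕ → ℝ) (u : ℕ) (hu : 1 ≤ u) :
    starMul lam f (delta 1) u = u * f (u - 1) + lam * u * f u := by
  simp only [starMul, delta]
  rw [Finset.Nat.sum_antidiagonal_eq_sum_range_succ_mk]
  rw [Finset.sum_congr rfl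
    (fun i _ => Finset.Nat.sum_antidiagonal_eq_sum_range_succ_mk _ _)]
  have key : ∀ i ∈ Finset.range (u+1),
      (∑ j ∈ Finset.range (u - i + 1),
        lam ^ i * ((u.factorial : ℝ) /
            ((i.factorial : ℝ) * (j.factorial : ℝ) * ((u-i-j).factorial : ℝ))) *
          f (i + j) * (if (i + (u - i - j)) = 1 then (1:ℝ) else 0))
      = (if i = 0 then (u : ℝ) * f (u-1) else 0)
        + (if i = 1 then lam * u * f u else 0) := by
    intro i hi
    rw [Finset.mem_range] at hi
    have step : ∀ j ∈ Finset.range (u - i + 1),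
        lam ^ i * ((u.factorial : ℝ) /
            ((i.factorial : ℝ) * (j.factorial : ℝ) * ((u-i-j).factorial : ℝ))) *
          f (i + j) * (if (i + (u - i - j)) = 1 then (1:ℝ) else 0)
        = if j = u - 1 then
            lam ^ i * ((u.factorial : ℝ) /
              ((i.factorial : ℝ) * ((u-1).factorial : ℝ) * ((u-i-(u-1)).factorial : ℝ))) *
              f (i + (u-1))
          else 0 := by
      intro j hj
      rw [Finset.mem_range] at hj
      by_cases hcase : j = u - 1
      · subst hcase
        rw [if_pos rfl, if_pos (by omega), mul_one]
      · rw [if_neg hcase, if_neg (by omega), mul_zero]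
    rw [Finset.sum_congr rfl step, Finset.sum_ite_eq' (Finset.range (u-i+1)) (u-1)]
    by_cases h0 : i = 0
    · subst h0
      rw [if_pos (Finset.mem_range.mpr (by omega)), if_pos rfl, if_neg (by omega), add_zero]
      have h1 : u - 0 - (u - 1) = 1 := by omega
      have h2 : (u.factorial : ℝ) = (u : ℝ) * ((u-1).factorial : ℝ) := by
        rw [← Nat.cast_mul, Nat.mul_factorial_pred (by omega)]
      rw [h1, h2]
      have h3 : ((u-1).factorial : ℝ) ≠ 0 := Nat.cast_ne_zero.mpr (Nat.factorial_ne_zero _)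
      field_simp [Nat.factorial]
      simp
    by_cases h1 : i = 1
    · subst h1
      rw [if_pos (Finset.mem_range.mpr (by omega)), if_neg h0, if_pos rfl, zero_add]
      have e1 : u - 1 - (u - 1) = 0 := by omega
      have e2 : 1 + (u - 1) = u := by omega
      have h2 : (u.factorial : ℝ) = (u : ℝ) * ((u-1).factorial : ℝ) := by
        rw [← Nat.cast_mul, Nat.mul_factorial_pred (by omega)]
      rw [e1, e2, h2]
      have h3 : ((u-1).factorial : ℝ) ≠ 0 := Nat.cast_ne_zero.mpr (Nat.factorial_ne_zero _)
      field_simp [Nat.factorial]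
      simp
    · rw [if_neg (by rw [Finset.mem_range]; omega), if_neg h0, if_neg h1, add_zero]
  rw [Finset.sum_congr rfl key, Finset.sum_add_distrib,
    Finset.sum_ite_eq' _ 0, Finset.sum_ite_eq' _ 1,
    if_pos (Finset.mem_range.mpr (by omega)), if_pos (Finset.mem_range.mpr (by omega))]

end Aux2

/-- For `n ≥ 1`, the `n`-fold `⋆`-power of `δ₁` satisfies
`δ₁^{⋆n}(m) = m! · S(n,m) · lam^{n−m}` for `m ≤ n`, and vanishes for `m > n`. -/
theorem stmt5 (lam : ℝ) (n : ℕ) (hn : 1 ≤ n) :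
    (∀ m ≤ n, starPow lam (delta 1) n m =
      (m.factorial : ℝ) * (stirling2 n m : ℝ) * lam ^ (n - m)) ∧
    (∀ m, n < m → starPow lam (delta 1) n m = 0) := by
  induction n with
  | zero => omega
  | succ k ih =>
    rcases Nat.eq_zero_or_pos k with rfl | hk
    · -- base case n = 1
      constructor
      · intro m hm
        interval_cases m
        · show delta 1 0 = _
          rw [stirling2_zero le_rfl]
          simp [delta]
        · show delta 1 1 = _
          rw [show stirling2 1 1 = 1 from by decide]
          simp [delta]
      · intro m hm
        show delta 1 m = 0
        simp only [delta]
        rw [if_neg (by omega)]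
    · have ih := ih hk
      obtain ⟨k, rfl⟩ : ∃ j, k = j + 1 := ⟨k - 1, by omega⟩
      have hpow : starPow lam (delta 1) (k+2)
          = starMul lam (starPow lam (delta 1) (k+1)) (delta 1) := rfl
      have hf : ∀ m, starPow lam (delta 1) (k+1) m
          = (m.factorial : ℝ) * (stirling2 (k+1) m : ℝ) * lam ^ (k+1-m) := by
        intro m
        by_cases hm : m ≤ k+1
        · exact ih.1 m hm
        · rw [ih.2 m (by omega), stirling2_eq_zero (by omega)]
          simp
      constructor
      · intro m hm
        rw [hpow]
        rcases Nat.eq_zero_or_pos m with rfl | hm1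
        · rw [starMul_delta_one_zero, stirling2_zero (by omega)]
          simp
        · rw [starMul_delta_one lam _ m hm1, hf, hf]
          obtain ⟨m', rfl⟩ : ∃ j, m = j + 1 := ⟨m - 1, by omega⟩
          rw [show m' + 1 - 1 = m' from rfl,
            show k + 2 = (k+1) + 1 from rfl, stirling2_succ (k+1) m',
            show k + 1 - m' = k + 2 - (m'+1) from by omega]
          by_cases hm2 : m' + 1 ≤ k + 1
          · rw [show k + 2 - (m'+1) = (k + 1 - (m'+1)) + 1 from by omega, pow_succ,
              Nat.factorial_succ]
            push_cast
            ring
          · have hz : stirling2 (k+1) (m'+1) = 0 := stirling2_eq_zero (by omega)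
            rw [hz, Nat.factorial_succ]
            push_cast
            ring
      · intro m hm
        rw [hpow, starMul_delta_one lam _ m (by omega),
          ih.2 (m-1) (by omega), ih.2 m (by omega)]
        ring
end

section
/- Fix λ ∈ ℝ and integers k, ℓ ≥ 1. Let δ_ℓ^{⋆k} denote the k-fold left-associated ⋆-product δ_ℓ ⋆ δ_ℓ ⋆ ⋯ ⋆ δ_ℓ (k factors). Then for every n ∈ ℕ one has δ_ℓ^{⋆k}(n) = λ^{kℓ−n} · B(n,k,ℓ); in particular δ_ℓ^{⋆k}(n) = 0 unless ℓ ≤ n ≤ kℓ. -/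
/-- `B(n,k,ℓ)`: the number of `k`-tuples `(T₁,…,T_k)` of (not necessarily disjoint)
subsets of `[n]` with `#T_i = ℓ` for all `i` and `T₁ ∪ ⋯ ∪ T_k = [n]`. -/
def Bcover (n k l : ℕ) : ℕ :=
  (Finset.univ.filter (fun T : Fin k → Finset (Fin n) =>
    (∀ i, (T i).card = l) ∧ Finset.univ.biUnion T = Finset.univ)).card

open Finset

lemma Bcover_eq_zero_of_lt {n k l : ℕ} (hk : 1 ≤ k) (h : n < l) : Bcover n k l = 0 := by
  rw [Bcover, Finset.card_eq_zero, Finset.filter_eq_empty_iff]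
  rintro T - ⟨hc, -⟩
  have := (T ⟨0, hk⟩).card_le_univ
  simp [hc ⟨0, hk⟩, Fintype.card_fin] at this
  omega

lemma Bcover_eq_zero_of_gt {n k l : ℕ} (h : k * l < n) : Bcover n k l = 0 := by
  rw [Bcover, Finset.card_eq_zero, Finset.filter_eq_empty_iff]
  rintro T - ⟨hc, hu⟩
  have h1 : (Finset.univ.biUnion T).card ≤ ∑ i : Fin k, (T i).card :=
    Finset.card_biUnion_le
  simp only [hc, Finset.sum_const, Finset.card_univ, Fintype.card_fin, smul_eq_mul, hu] at h1
  omega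

lemma Bcover_one (n l : ℕ) : Bcover n 1 l = if n = l then 1 else 0 := by
  split_ifs with h
  · subst h
    rw [Bcover, Finset.card_eq_one]
    refine ⟨fun _ => Finset.univ, ?_⟩
    ext T
    simp only [Finset.mem_filter, Finset.mem_univ, true_and, Finset.mem_singleton]
    constructor
    · rintro ⟨hc, -⟩
      funext i
      have := hc i
      have h2 : #(T i) = Fintype.card (Fin n) := by simpa using this
      rwa [Finset.card_eq_iff_eq_univ] at h2
    · rintro rfl
      simp [Finset.card_fin]
  · rcases Nat.lt_or_ge n l with h' | h'
    · exact Bcover_eq_zero_of_lt le_rfl h'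
    · exact Bcover_eq_zero_of_gt (by omega)

lemma Finset.biUnion_map_emb {α β γ : Type*} [DecidableEq β] [DecidableEq γ]
    (s : Finset α) (t : α → Finset β) (f : β ↪ γ) :
    (s.biUnion t).map f = s.biUnion fun a => (t a).map f := by
  ext x
  simp [Finset.mem_biUnion, Finset.mem_map]
  tauto

lemma card_tuples_union_eq (n k l : ℕ) (A : Finset (Fin n)) :
    ((Finset.univ : Finset (Fin k → Finset (Fin n))).filter (fun T =>
      (∀ i, (T i).card = l) ∧ Finset.univ.biUnion T = A)).card = Bcover A.card k l := by
  classical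
  set emb : Fin A.card ↪ Fin n := (A.orderEmbOfFin rfl).toEmbedding with hemb
  have hrange : Set.range emb = ↑A := A.range_orderEmbOfFin rfl
  have hmapuniv : Finset.univ.map emb = A := by
    apply Finset.eq_of_subset_of_card_le
    · intro x hx
      rcases Finset.mem_map.1 hx with ⟨y, -, rfl⟩
      exact A.orderEmbOfFin_mem rfl y
    · simp
  rw [Bcover]
  symm
  apply Finset.card_bij (fun S _ => fun j => (S j).map emb)
  · rintro S hS
    rw [Finset.mem_filter] at hS ⊢
    obtain ⟨-, hc, hu⟩ := hS
    refine ⟨Finset.mem_univ _, fun i => by simp [hc i], ?_⟩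
    rw [← Finset.biUnion_map_emb, hu, hmapuniv]
  · intro S hS S' hS' h
    funext j
    apply Finset.map_injective emb
    exact congrFun h j
  · rintro T hT
    rw [Finset.mem_filter] at hT
    obtain ⟨-, hc, hu⟩ := hT
    have hsub : ∀ j, T j ⊆ A := by
      intro j
      rw [← hu]
      exact Finset.subset_biUnion_of_mem T (Finset.mem_univ j)
    have key : ∀ j, ((T j).preimage emb emb.injective.injOn).map emb = T j := by
      intro j
      rw [Finset.map_eq_image, Finset.image_preimage]
      rw [Finset.filter_true_of_mem]
      intro x hx
      rw [hrange]
      exact_mod_cast hsub j hx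
    refine ⟨fun j => (T j).preimage emb emb.injective.injOn, ?_, ?_⟩
    · rw [Finset.mem_filter]
      refine ⟨Finset.mem_univ _, fun i => ?_, ?_⟩
      · rw [← hc i, ← key i, Finset.card_map]
      · apply Finset.map_injective emb
        rw [Finset.biUnion_map_emb]
        simp only [key]
        rw [hu, hmapuniv]
    · funext j
      exact key j

lemma card_tuples_cover_compl (n k l : ℕ) (T : Finset (Fin n)) :
    ((Finset.univ : Finset (Fin k → Finset (Fin n))).filter (fun TT =>
      (∀ i, (TT i).card = l) ∧ T ∪ Finset.univ.biUnion TT = Finset.univ)).card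
      = ∑ U ∈ T.powerset, Bcover (U.card + (n - T.card)) k l := by
  classical
  rw [Finset.card_eq_sum_card_fiberwise (f := fun TT => Finset.univ.biUnion TT)
      (t := Finset.univ.filter (fun A => T ∪ A = Finset.univ))
      (by rintro TT hTT
          rw [Finset.mem_coe, Finset.mem_filter] at hTT
          exact Finset.mem_filter.2 ⟨Finset.mem_univ _, hTT.2.2⟩)]
  rw [Finset.sum_nbij' (i := fun A => A ∩ T) (j := fun U => U ∪ Tᶜ)
      (s := Finset.univ.filter (fun A => T ∪ A = Finset.univ)) (t := T.powerset)
      (fun A hA => Finset.mem_powerset.2 Finset.inter_subset_right)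
      (fun U hU => by
        rw [Finset.mem_filter]
        refine ⟨Finset.mem_univ _, ?_⟩
        ext x
        simp only [Finset.mem_union, Finset.mem_compl, Finset.mem_univ, iff_true]
        tauto)
      (fun A hA => by
        rw [Finset.mem_filter] at hA
        have hsub : Tᶜ ⊆ A := by
          intro x hx
          rw [Finset.mem_compl] at hx
          have : x ∈ T ∪ A := hA.2 ▸ Finset.mem_univ x
          rcases Finset.mem_union.1 this with h | h
          · exact absurd h hx
          · exact h
        ext x
        simp only [Finset.mem_union, Finset.mem_inter, Finset.mem_compl]
        by_cases hxT : x ∈ T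
        · simp [hxT]
        · simp [hxT, hsub (Finset.mem_compl.2 hxT)])
      (fun U hU => by
        rw [Finset.mem_powerset] at hU
        ext x
        simp only [Finset.mem_union, Finset.mem_inter, Finset.mem_compl]
        constructor
        · rintro ⟨h1 | h1, h2⟩
          · exact h1
          · exact absurd h2 h1
        · intro h
          exact ⟨Or.inl h, hU h⟩)]
  intro A hA
  rw [Finset.mem_filter] at hA
  have hsub : Tᶜ ⊆ A := by
    intro x hx
    rw [Finset.mem_compl] at hx
    have : x ∈ T ∪ A := hA.2 ▸ Finset.mem_univ x
    rcases Finset.mem_union.1 this with h | h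
    · exact absurd h hx
    · exact h
  have hAcard : (A ∩ T).card + (n - T.card) = A.card := by
    have h1 : A \ T = Tᶜ := by
      ext x
      simp only [Finset.mem_sdiff, Finset.mem_compl]
      exact ⟨fun h => h.2, fun h => ⟨hsub (Finset.mem_compl.2 h), h⟩⟩
    have h2 : (A ∩ T).card + (A \ T).card = A.card := Finset.card_inter_add_card_sdiff A T
    rw [h1, Finset.card_compl, Fintype.card_fin] at h2
    exact h2
  rw [hAcard, ← card_tuples_union_eq n k l A]
  congr 1
  ext TT
  simp only [Finset.mem_filter, Finset.mem_univ, true_and]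
  constructor
  · rintro ⟨⟨hc, hcov⟩, hu⟩
    exact ⟨hc, hu⟩
  · rintro ⟨hc, hu⟩
    exact ⟨⟨hc, by rw [hu, hA.2]⟩, hu⟩

lemma Bcover_succ (n k l : ℕ) (hln : l ≤ n) :
    Bcover n (k+1) l
      = n.choose l * ∑ u ∈ Finset.range (l+1), l.choose u * Bcover (u + (n - l)) k l := by
  classical
  have biUnion_succ : ∀ TT' : Fin (k+1) → Finset (Fin n),
      Finset.univ.biUnion TT' = TT' 0 ∪ Finset.univ.biUnion (fun i : Fin k => TT' i.succ) := by
    intro TT'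
    ext x
    simp only [Finset.mem_biUnion, Finset.mem_univ, true_and, Finset.mem_union]
    rw [Fin.exists_fin_succ]
  rw [Bcover]
  rw [Finset.card_eq_sum_card_fiberwise (f := fun TT' => TT' 0)
      (t := Finset.powersetCard l Finset.univ)
      (by rintro TT' hTT'
          rw [Finset.mem_coe, Finset.mem_filter] at hTT'
          exact Finset.mem_powersetCard.2 ⟨Finset.subset_univ _, hTT'.2.1 0⟩)]
  have step : ∀ T ∈ Finset.powersetCard l Finset.univ,
      ((Finset.univ.filter (fun TT' : Fin (k+1) → Finset (Fin n) =>
        (∀ i, (TT' i).card = l) ∧ Finset.univ.biUnion TT' = Finset.univ)).filter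
        (fun TT' => TT' 0 = T)).card
      = ∑ U ∈ T.powerset, Bcover (U.card + (n - T.card)) k l := by
    intro T hT
    obtain ⟨-, hTcard⟩ := Finset.mem_powersetCard.1 hT
    rw [← card_tuples_cover_compl n k l T]
    apply Finset.card_nbij' (i := fun (TT' : Fin (k+1) → Finset (Fin n)) (i : Fin k) => TT' i.succ)
      (j := fun (TT : Fin k → Finset (Fin n)) => Fin.cons T TT)
    · rintro TT' hTT'
      rw [Finset.mem_coe, Finset.mem_filter] at hTT'
      obtain ⟨h1, h0⟩ := hTT'
      rw [Finset.mem_filter] at h1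
      obtain ⟨-, hc, hu⟩ := h1
      rw [Finset.mem_coe, Finset.mem_filter]
      refine ⟨Finset.mem_univ _, fun i => hc _, ?_⟩
      rw [← h0, ← biUnion_succ, hu]
    · rintro TT hTT
      rw [Finset.mem_coe, Finset.mem_filter] at hTT
      obtain ⟨-, hc, hu⟩ := hTT
      rw [Finset.mem_coe, Finset.mem_filter, Finset.mem_filter]
      refine ⟨⟨Finset.mem_univ _, ?_, ?_⟩, by simp⟩
      · intro i
        refine Fin.cases ?_ ?_ i
        · simpa using hTcard
        · intro j
          simpa using hc j
      · rw [biUnion_succ]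
        simpa using hu
    · intro TT' hTT'
      rw [Finset.mem_coe, Finset.mem_filter] at hTT'
      funext i
      refine Fin.cases ?_ ?_ i
      · simp [hTT'.2]
      · intro j
        simp
    · intro TT hTT
      funext i
      simp
  rw [Finset.sum_congr rfl step]
  have inner : ∀ T ∈ Finset.powersetCard l (Finset.univ : Finset (Fin n)),
      ∑ U ∈ T.powerset, Bcover (U.card + (n - T.card)) k l
        = ∑ u ∈ Finset.range (l+1), l.choose u * Bcover (u + (n - l)) k l := by
    intro T hT
    obtain ⟨-, hTcard⟩ := Finset.mem_powersetCard.1 hT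
    rw [hTcard]
    rw [Finset.sum_powerset_apply_card (f := fun m => Bcover (m + (n - l)) k l)]
    rw [hTcard]
    simp [smul_eq_mul]
  rw [Finset.sum_congr rfl inner, Finset.sum_const, Finset.card_powersetCard]
  simp [Finset.card_univ, smul_eq_mul]

lemma fact_ratio (n l u : ℕ) (hu : u ≤ l) (hln : l ≤ n) :
    ((n.factorial : ℝ)) / ((u.factorial : ℝ) * (((n-l).factorial : ℝ)) * (((l-u).factorial : ℝ)))
      = (n.choose l : ℝ) * (l.choose u : ℝ) := by
  have h1 : l.choose u * u.factorial * (l-u).factorial = l.factorial :=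
    Nat.choose_mul_factorial_mul_factorial hu
  have h2 : n.choose l * l.factorial * (n-l).factorial = n.factorial :=
    Nat.choose_mul_factorial_mul_factorial hln
  have hn : n.factorial
      = n.choose l * l.choose u * u.factorial * (l-u).factorial * (n-l).factorial := by
    rw [← h2, ← h1]; ring
  have hne : ((u.factorial : ℝ) * (((n-l).factorial : ℝ)) * (((l-u).factorial : ℝ))) ≠ 0 := by
    apply mul_ne_zero (mul_ne_zero _ _) <;>
      exact Nat.cast_ne_zero.mpr (Nat.factorial_ne_zero _)
  rw [div_eq_iff hne, hn]
  push_cast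
  ring

lemma step_formula (lam : ℝ) (k l : ℕ) (hk : 1 ≤ k) (hl : 1 ≤ l)
    (f : ℕ → ℝ) (hf : ∀ m, f m = lam ^ (k*l - m) * (Bcover m k l : ℝ)) (n : ℕ) :
    starMul lam f (delta l) n = lam ^ ((k+1)*l - n) * (Bcover n (k+1) l : ℝ) := by
  classical
  rcases Nat.lt_or_ge n l with hn | hn
  · rw [Bcover_eq_zero_of_lt (by omega) hn]
    simp only [Nat.cast_zero, mul_zero]
    rw [starMul]
    apply Finset.sum_eq_zero
    intro p hp
    apply Finset.sum_eq_zero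
    intro q hq
    rw [Finset.HasAntidiagonal.mem_antidiagonal] at hp hq
    have : p.1 + q.2 ≠ l := by omega
    simp [delta, this]
  · have hval : ∀ u, u ≤ l →
        lam ^ u * ((n.factorial : ℝ) /
          ((u.factorial : ℝ) * (((n-l).factorial : ℝ)) * (((l-u).factorial : ℝ)))) * f (u + (n-l))
        = lam ^ ((k+1)*l - n) *
            ((n.choose l : ℝ) * ((l.choose u : ℝ) * (Bcover (u+(n-l)) k l : ℝ))) := by
      intro u hu
      rw [hf, fact_ratio n l u hu hn]
      by_cases hB : Bcover (u+(n-l)) k l = 0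
      · rw [hB]; simp
      · have hle : u + (n-l) ≤ k*l := by
          by_contra hgt
          exact hB (Bcover_eq_zero_of_gt (by omega))
        obtain ⟨Kl, hKl⟩ : ∃ K, k*l = K := ⟨_, rfl⟩
        have hkl1 : (k+1)*l = Kl + l := by rw [← hKl]; ring
        rw [hKl] at hle ⊢
        rw [hkl1]
        have hexp : Kl + l - n = u + (Kl - (u + (n-l))) := by omega
        rw [hexp, pow_add]
        ring
    rw [starMul]
    rw [Finset.sum_sigma']
    simp only [delta, mul_ite, mul_one, mul_zero]
    rw [← Finset.sum_filter]
    rw [Finset.sum_nbij' (i := fun x => x.1.1)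
        (j := fun u => (⟨(u, n-u), (n-l, l-u)⟩ : (_ : ℕ × ℕ) × ℕ × ℕ))
        (t := Finset.range (l+1))
        (g := fun u => lam ^ ((k+1)*l - n) *
            ((n.choose l : ℝ) * ((l.choose u : ℝ) * (Bcover (u+(n-l)) k l : ℝ))))
        (fun x hx => by
          simp only [Finset.mem_filter, Finset.mem_sigma, Finset.HasAntidiagonal.mem_antidiagonal] at hx
          exact Finset.mem_range.mpr (show x.1.1 < l + 1 by omega))
        (fun u hu => by
          rw [Finset.mem_range] at hu
          beta_reduce
          simp only [Finset.mem_filter, Finset.mem_sigma, Finset.HasAntidiagonal.mem_antidiagonal]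
          omega)
        (fun x hx => by
          simp only [Finset.mem_filter, Finset.mem_sigma, Finset.HasAntidiagonal.mem_antidiagonal] at hx
          obtain ⟨⟨u, p2⟩, q1, q2⟩ := x
          beta_reduce
          simp only at hx
          obtain ⟨⟨h1, h2⟩, h3⟩ := hx
          have e1 : p2 = n - u := by omega
          have e2 : q1 = n - l := by omega
          have e3 : q2 = l - u := by omega
          subst e1; subst e2; subst e3
          rfl)
        (fun u hu => rfl)
        (fun x hx => by
          simp only [Finset.mem_filter, Finset.mem_sigma, Finset.HasAntidiagonal.mem_antidiagonal] at hx
          obtain ⟨⟨u, p2⟩, q1, q2⟩ := x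
          beta_reduce
          simp only at hx
          have hq1 : q1 = n - l := by omega
          have hq2 : q2 = l - u := by omega
          have hu2 : u ≤ l := by omega
          subst hq1 hq2
          simpa using hval u hu2)]
    have hcast : ((Bcover n (k+1) l : ℕ) : ℝ)
        = (n.choose l : ℝ) * ∑ u ∈ Finset.range (l+1),
            (l.choose u : ℝ) * (Bcover (u+(n-l)) k l : ℝ) := by
      rw [Bcover_succ n k l hn]
      push_cast
      rfl
    rw [hcast]
    rw [← Finset.mul_sum]
    congr 1
    rw [← Finset.mul_sum]

/-- For `k, ℓ ≥ 1`, the `k`-fold `⋆`-power of `δ_ℓ` satisfies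
`δ_ℓ^{⋆k}(n) = lam^{kℓ−n} · B(n,k,ℓ)` for all `n`; in particular it vanishes
unless `ℓ ≤ n ≤ kℓ`. -/
theorem stmt7 (lam : ℝ) (k l : ℕ) (hk : 1 ≤ k) (hl : 1 ≤ l) :
    (∀ n : ℕ, starPow lam (delta l) k n = lam ^ (k * l - n) * (Bcover n k l : ℝ)) ∧
    (∀ n : ℕ, n < l ∨ k * l < n → starPow lam (delta l) k n = 0) := by
  have main : ∀ K, 1 ≤ K → ∀ n,
      starPow lam (delta l) K n = lam ^ (K * l - n) * (Bcover n K l : ℝ) := by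
    intro K
    induction K with
    | zero => intro h; exact absurd h (by omega)
    | succ K ih =>
      intro _
      rcases Nat.eq_zero_or_pos K with rfl | hK
      · intro n
        show delta l n = _
        rw [Bcover_one]
        by_cases h : n = l
        · subst h
          simp [delta]
        · simp [delta, h]
      · intro n
        obtain ⟨m, rfl⟩ : ∃ m, K = m + 1 := ⟨K - 1, by omega⟩
        show starMul lam (starPow lam (delta l) (m + 1)) (delta l) n = _
        exact step_formula lam (m + 1) l (by omega) hl _ (ih (by omega)) n
  refine ⟨main k hk, ?_⟩
  intro n hn
  rw [main k hk n]
  rcases hn with h | h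
  · rw [Bcover_eq_zero_of_lt hk h]; simp
  · rw [Bcover_eq_zero_of_gt h]; simp
end

section
/- For all integers n, k ≥ 1, the generalized Stirling numbers of the second kind satisfy the recurrence \overline{S}(n,k) = Σ_{i=0}^{n−1} C(n−1, i) · 2^i · \overline{S}(i, k−1), where C(n−1, i) is the binomial coefficient. -/
open Finset

/-- The generalized Stirling number of the second kind `\overline{S}(n,k)`: the number
of `k`-tuples `(B₁,…,B_k)` of nonempty (not necessarily disjoint) subsets of `[n]`
with `B₁ ∪ ⋯ ∪ B_k = [n]` and `max B₁ < max B₂ < ⋯ < max B_k`. -/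
def gstirling (n k : ℕ) : ℕ :=
  (Finset.univ.filter (fun B : Fin k → Finset (Fin n) =>
    (∀ i, (B i).Nonempty) ∧ Finset.univ.biUnion B = Finset.univ ∧
    ∀ i j : Fin k, i < j → (B i).max < (B j).max)).card

private lemma max'_image_sm {α β : Type*} [LinearOrder α] [LinearOrder β] [DecidableEq β] {f : α → β}
    (hf : StrictMono f) (s : Finset α) (hs : s.Nonempty)
    (h : (s.image f).Nonempty) :
    (s.image f).max' h = f (s.max' hs) := by
  refine le_antisymm (Finset.max'_le _ _ _ ?_)
    (Finset.le_max' _ _ (Finset.mem_image_of_mem f (s.max'_mem hs)))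
  intro y hy
  obtain ⟨x, hx, rfl⟩ := Finset.mem_image.mp hy
  exact hf.monotone (Finset.le_max' _ _ hx)

private lemma max_lt_max_iff' {α : Type*} [LinearOrder α] {s t : Finset α}
    (hs : s.Nonempty) (ht : t.Nonempty) :
    s.max < t.max ↔ s.max' hs < t.max' ht := by
  rw [← Finset.coe_max' hs, ← Finset.coe_max' ht, WithBot.coe_lt_coe]

private lemma max_lt_max_image {α β : Type*} [LinearOrder α] [LinearOrder β]
    [DecidableEq β] {f : α → β}
    (hf : StrictMono f) {s t : Finset α} (hs : s.Nonempty) (ht : t.Nonempty) :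
    (s.image f).max < (t.image f).max ↔ s.max < t.max := by
  rw [max_lt_max_iff' (hs.image f) (ht.image f), max_lt_max_iff' hs ht,
    max'_image_sm hf s hs _, max'_image_sm hf t ht _, hf.lt_iff_lt]

/-- Relabeling lemma: generalized partitions of a finset `T ⊆ Fin n` correspond to
generalized partitions of `Fin T.card`. -/
private lemma count_rel (n k : ℕ) (T : Finset (Fin n)) :
    (Finset.univ.filter (fun B : Fin k → Finset (Fin n) =>
      (∀ i, (B i).Nonempty) ∧ Finset.univ.biUnion B = T ∧
      ∀ i j : Fin k, i < j → (B i).max < (B j).max)).card = gstirling T.card k := by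
  classical
  rw [gstirling]
  set e := T.orderIsoOfFin rfl with he
  have hsm : StrictMono (fun x : Fin T.card => ((e x : {y : Fin n // y ∈ T}) : Fin n)) :=
    fun a b h => Subtype.coe_lt_coe.mpr (e.strictMono h)
  refine Finset.card_bij'
    (fun B _ => fun j => Finset.univ.filter (fun x : Fin T.card => ((e x : _) : Fin n) ∈ B j))
    (fun C _ => fun j => (C j).image (fun x : Fin T.card => ((e x : _) : Fin n)))
    ?_ ?_ ?_ ?_
  · -- forward maps into target
    intro B hB
    rw [Finset.mem_filter] at hB
    obtain ⟨-, hne, hU, hmax⟩ := hB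
    have hBsub : ∀ j, B j ⊆ T := fun j b hb =>
      hU ▸ Finset.mem_biUnion.mpr ⟨j, Finset.mem_univ j, hb⟩
    have himg : ∀ j, (Finset.univ.filter
        (fun x : Fin T.card => ((e x : _) : Fin n) ∈ B j)).image
        (fun x : Fin T.card => ((e x : _) : Fin n)) = B j := by
      intro j
      ext b
      simp only [Finset.mem_image, Finset.mem_filter, Finset.mem_univ, true_and]
      constructor
      · rintro ⟨x, hx, rfl⟩; exact hx
      · intro hb
        refine ⟨e.symm ⟨b, hBsub j hb⟩, ?_, ?_⟩ <;> simp [hb]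
    have hne' : ∀ j, (Finset.univ.filter
        (fun x : Fin T.card => ((e x : _) : Fin n) ∈ B j)).Nonempty := by
      intro j
      rw [← Finset.image_nonempty (f := fun x : Fin T.card => ((e x : _) : Fin n)), himg j]
      exact hne j
    rw [Finset.mem_filter]
    refine ⟨Finset.mem_univ _, hne', ?_, ?_⟩
    · apply Finset.eq_univ_iff_forall.mpr
      intro x
      have hx : ((e x : _) : Fin n) ∈ Finset.univ.biUnion B := by
        rw [hU]; exact (e x).2
      obtain ⟨j, -, hj⟩ := Finset.mem_biUnion.mp hx
      exact Finset.mem_biUnion.mpr ⟨j, Finset.mem_univ j, by simpa using hj⟩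
    · intro i j hij
      have h := hmax i j hij
      rw [← himg i, ← himg j] at h
      exact (max_lt_max_image hsm (hne' i) (hne' j)).mp h
  · -- backward maps into source
    intro C hC
    rw [Finset.mem_filter] at hC
    obtain ⟨-, hne, hU, hmax⟩ := hC
    rw [Finset.mem_filter]
    refine ⟨Finset.mem_univ _, fun j => (hne j).image _, ?_, ?_⟩
    · ext b
      simp only [Finset.mem_biUnion, Finset.mem_univ, true_and, Finset.mem_image]
      constructor
      · rintro ⟨j, x, hx, rfl⟩; exact (e x).2
      · intro hb
        have : e.symm ⟨b, hb⟩ ∈ Finset.univ.biUnion C := by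
          rw [hU]; exact Finset.mem_univ _
        obtain ⟨j, -, hj⟩ := Finset.mem_biUnion.mp this
        exact ⟨j, e.symm ⟨b, hb⟩, hj, by simp⟩
    · intro i j hij
      exact (max_lt_max_image hsm (hne i) (hne j)).mpr (hmax i j hij)
  · -- left inverse
    intro B hB
    rw [Finset.mem_filter] at hB
    obtain ⟨-, hne, hU, hmax⟩ := hB
    have hBsub : ∀ j, B j ⊆ T := fun j b hb =>
      hU ▸ Finset.mem_biUnion.mpr ⟨j, Finset.mem_univ j, hb⟩
    funext j
    ext b
    simp only [Finset.mem_image, Finset.mem_filter, Finset.mem_univ, true_and]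
    constructor
    · rintro ⟨x, hx, rfl⟩; exact hx
    · intro hb
      refine ⟨e.symm ⟨b, hBsub j hb⟩, ?_, ?_⟩ <;> simp [hb]
  · -- right inverse
    intro C hC
    funext j
    ext x
    simp only [Finset.mem_filter, Finset.mem_univ, true_and, Finset.mem_image]
    constructor
    · rintro ⟨y, hy, hxy⟩
      have : y = x := hsm.injective hxy
      exact this ▸ hy
    · intro hx; exact ⟨x, hx, rfl⟩

/-- Fiber lemma: generalized partitions of `[n]` with `m+1` blocks whose first `m` blocks
have union `T` (not containing the top) and whose last block meets `T` in `E` correspond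
to generalized partitions of `T` with `m` blocks. -/
private lemma fiber_card (n m : ℕ) (T E : Finset (Fin (n + 1)))
    (hT : Fin.last n ∉ T) (hE : E ⊆ T) :
    ((Finset.univ.filter (fun B : Fin (m + 1) → Finset (Fin (n + 1)) =>
      (∀ i, (B i).Nonempty) ∧ Finset.univ.biUnion B = Finset.univ ∧
      ∀ i j : Fin (m + 1), i < j → (B i).max < (B j).max)).filter
      (fun B => Finset.univ.biUnion (fun j : Fin m => B j.castSucc) = T ∧
        B (Fin.last m) ∩ T = E)).card
    = (Finset.univ.filter (fun C : Fin m → Finset (Fin (n + 1)) =>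
      (∀ i, (C i).Nonempty) ∧ Finset.univ.biUnion C = T ∧
      ∀ i j : Fin m, i < j → (C i).max < (C j).max)).card := by
  classical
  refine Finset.card_bij'
    (fun B _ => fun j : Fin m => B j.castSucc)
    (fun C _ => Fin.snoc C (Tᶜ ∪ E))
    ?_ ?_ ?_ ?_
  · intro B hB
    simp only [Finset.mem_filter, Finset.mem_univ, true_and] at hB ⊢
    obtain ⟨⟨hne, hU, hmax⟩, hUT, hIE⟩ := hB
    exact ⟨fun j => hne _, hUT,
      fun i j hij => hmax _ _ (Fin.castSucc_lt_castSucc_iff.mpr hij)⟩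
  · intro C hC
    simp only [Finset.mem_filter, Finset.mem_univ, true_and] at hC ⊢
    obtain ⟨hne, hU, hmax⟩ := hC
    have hCsub : ∀ j, C j ⊆ T := fun j b hb =>
      hU ▸ Finset.mem_biUnion.mpr ⟨j, Finset.mem_univ j, hb⟩
    have htop : Fin.last n ∈ Tᶜ ∪ E := Finset.mem_union_left _ (Finset.mem_compl.mpr hT)
    refine ⟨⟨?_, ?_, ?_⟩, ?_, ?_⟩
    · intro i
      refine Fin.lastCases ?_ ?_ i
      · rw [Fin.snoc_last]; exact ⟨Fin.last n, htop⟩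
      · intro j; rw [Fin.snoc_castSucc]; exact hne j
    · apply Finset.eq_univ_iff_forall.mpr
      intro x
      by_cases hx : x ∈ T
      · rw [← hU] at hx
        obtain ⟨j, -, hj⟩ := Finset.mem_biUnion.mp hx
        exact Finset.mem_biUnion.mpr ⟨j.castSucc, Finset.mem_univ _,
          by rw [Fin.snoc_castSucc]; exact hj⟩
      · exact Finset.mem_biUnion.mpr ⟨Fin.last m, Finset.mem_univ _,
          by rw [Fin.snoc_last]; exact Finset.mem_union_left _ (Finset.mem_compl.mpr hx)⟩
    · intro i j hij
      by_cases hj : j = Fin.last m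
      · subst hj
        obtain ⟨i', rfl⟩ := Fin.exists_castSucc_eq.mpr (ne_of_lt hij)
        rw [Fin.snoc_last, Fin.snoc_castSucc]
        have h1 : (C i').max < (↑(Fin.last n) : WithBot (Fin (n + 1))) := by
          rw [← Finset.coe_max' (hne i')]
          apply WithBot.coe_lt_coe.mpr
          refine lt_of_le_of_ne (Fin.le_last _) ?_
          intro h
          exact hT (h ▸ hCsub i' ((C i').max'_mem (hne i')))
        exact h1.trans_le (Finset.le_max htop)
      · obtain ⟨j', rfl⟩ := Fin.exists_castSucc_eq.mpr hj
        have hi : i ≠ Fin.last m := ne_of_lt (lt_of_lt_of_le hij (Fin.le_last _))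
        obtain ⟨i', rfl⟩ := Fin.exists_castSucc_eq.mpr hi
        rw [Fin.snoc_castSucc, Fin.snoc_castSucc]
        exact hmax i' j' (Fin.castSucc_lt_castSucc_iff.mp hij)
    · simp only [Fin.snoc_castSucc]
      exact hU
    · rw [Fin.snoc_last]
      ext x
      simp only [Finset.mem_inter, Finset.mem_union, Finset.mem_compl]
      constructor
      · rintro ⟨h1 | h1, h2⟩
        · exact absurd h2 h1
        · exact h1
      · intro h; exact ⟨Or.inr h, hE h⟩
  · -- left inverse
    intro B hB
    simp only [Finset.mem_filter, Finset.mem_univ, true_and] at hB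
    obtain ⟨⟨hne, hU, hmax⟩, hUT, hIE⟩ := hB
    funext i
    refine Fin.lastCases ?_ ?_ i
    · simp only [Fin.snoc_last]
      ext x
      simp only [Finset.mem_union, Finset.mem_compl]
      constructor
      · rintro (hx | hx)
        · have : x ∈ Finset.univ.biUnion B := hU ▸ Finset.mem_univ _
          obtain ⟨j, -, hj⟩ := Finset.mem_biUnion.mp this
          by_cases hjl : j = Fin.last m
          · exact hjl ▸ hj
          · obtain ⟨j', rfl⟩ := Fin.exists_castSucc_eq.mpr hjl
            exact absurd (hUT ▸ Finset.mem_biUnion.mpr ⟨j', Finset.mem_univ _, hj⟩) hx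
        · exact (Finset.mem_inter.mp (hIE ▸ hx)).1
      · intro hx
        by_cases hxT : x ∈ T
        · exact Or.inr (hIE ▸ Finset.mem_inter.mpr ⟨hx, hxT⟩)
        · exact Or.inl hxT
    · intro j
      simp only [Fin.snoc_castSucc]
  · intro C hC
    funext j
    simp only [Fin.snoc_castSucc]

/-- The recurrence `\overline{S}(n,k) = Σ_{i=0}^{n−1} C(n−1,i) · 2^i · \overline{S}(i,k−1)`
for `n, k ≥ 1`. -/
theorem stmt9 (n k : ℕ) (hn : 1 ≤ n) (hk : 1 ≤ k) :
    gstirling n k = ∑ i ∈ Finset.range n, (n - 1).choose i * 2 ^ i * gstirling i (k - 1) := by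
  classical
  obtain ⟨m, rfl⟩ : ∃ m, k = m + 1 := ⟨k - 1, (Nat.succ_pred_eq_of_pos hk).symm⟩
  obtain ⟨n', rfl⟩ : ∃ n', n = n' + 1 := ⟨n - 1, (Nat.succ_pred_eq_of_pos hn).symm⟩
  simp only [Nat.add_sub_cancel]
  set X : Finset (Fin (n' + 1)) := Finset.univ.erase (Fin.last n') with hX
  have hXcard : X.card = n' := by
    rw [hX, Finset.card_erase_of_mem (Finset.mem_univ _), Finset.card_univ, Fintype.card_fin]
    rfl
  set A : Finset (Fin (m + 1) → Finset (Fin (n' + 1))) :=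
    Finset.univ.filter (fun B : Fin (m + 1) → Finset (Fin (n' + 1)) =>
      (∀ i, (B i).Nonempty) ∧ Finset.univ.biUnion B = Finset.univ ∧
      ∀ i j : Fin (m + 1), i < j → (B i).max < (B j).max) with hA
  set key : (Fin (m + 1) → Finset (Fin (n' + 1))) →
      ((_ : Finset (Fin (n' + 1))) × Finset (Fin (n' + 1))) :=
    fun B => ⟨Finset.univ.biUnion (fun j : Fin m => B j.castSucc),
      B (Fin.last m) ∩ Finset.univ.biUnion (fun j : Fin m => B j.castSucc)⟩ with hkey
  set s : Finset ((_ : Finset (Fin (n' + 1))) × Finset (Fin (n' + 1))) :=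
    X.powerset.sigma (fun T => T.powerset) with hs
  have hmaps : ∀ B ∈ A, key B ∈ s := by
    intro B hB
    simp only [hA, Finset.mem_filter, Finset.mem_univ, true_and] at hB
    obtain ⟨hne, hU, hmax⟩ := hB
    rw [hs, Finset.mem_sigma, Finset.mem_powerset, Finset.mem_powerset]
    refine ⟨?_, Finset.inter_subset_right⟩
    intro x hx
    obtain ⟨j, -, hj⟩ := Finset.mem_biUnion.mp hx
    rw [hX, Finset.mem_erase]
    refine ⟨?_, Finset.mem_univ _⟩
    rintro rfl
    -- last n' is in a non-last block, contradict max condition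
    have h1 : (↑(Fin.last n') : WithBot (Fin (n' + 1))) ≤ (B j.castSucc).max :=
      Finset.le_max hj
    have h2 : (B j.castSucc).max < (B (Fin.last m)).max :=
      hmax _ _ (Fin.castSucc_lt_last j)
    have h3 : (B (Fin.last m)).max ≤ (↑(Fin.last n') : WithBot (Fin (n' + 1))) := by
      rw [← Finset.coe_max' (hne _)]
      exact WithBot.coe_le_coe.mpr (Fin.le_last _)
    exact absurd (h1.trans_lt (h2.trans_le h3)) (lt_irrefl _)
  have hcount : gstirling (n' + 1) (m + 1) = ∑ p ∈ s, gstirling p.1.card m := by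
    rw [gstirling, ← hA, Finset.card_eq_sum_card_fiberwise hmaps]
    refine Finset.sum_congr rfl ?_
    rintro ⟨T, E⟩ hp
    rw [hs, Finset.mem_sigma, Finset.mem_powerset, Finset.mem_powerset] at hp
    obtain ⟨hTX, hET⟩ := hp
    have hTtop : Fin.last n' ∉ T := fun h => (Finset.mem_erase.mp (hTX h)).1 rfl
    have hfilt : A.filter (fun B => key B = ⟨T, E⟩)
        = A.filter (fun B =>
            Finset.univ.biUnion (fun j : Fin m => B j.castSucc) = T ∧
            B (Fin.last m) ∩ T = E) := by
      apply Finset.filter_congr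
      intro B _
      rw [hkey]
      rw [Sigma.mk.inj_iff, heq_iff_eq]
      constructor
      · rintro ⟨h1, h2⟩; exact ⟨h1, by rw [← h1]; exact h2⟩
      · rintro ⟨h1, h2⟩; exact ⟨h1, by rw [h1]; exact h2⟩
    rw [hfilt, hA, fiber_card n' m T E hTtop hET, count_rel]
  rw [hcount, hs, Finset.sum_sigma]
  have hinner : ∀ T ∈ X.powerset,
      (∑ _E ∈ T.powerset, gstirling T.card m) = 2 ^ T.card * gstirling T.card m := by
    intro T _
    rw [Finset.sum_const, Finset.card_powerset, smul_eq_mul]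
  rw [Finset.sum_congr rfl hinner]
  have := Finset.sum_powerset_apply_card (fun i => 2 ^ i * gstirling i m) (x := X)
  rw [this, hXcard]
  refine Finset.sum_congr rfl ?_
  intro i _
  rw [smul_eq_mul, mul_assoc]
end

section
/- For all integers n ≥ k ≥ 1, \overline{S}(n,k) = 2^{C(k,2)} · Σ Π_{i=1}^{n−k} (2^{k−m_i+i} − 1), where the sum ranges over all strictly increasing sequences 1 ≤ m₁ < m₂ < ⋯ < m_{n−k} ≤ n−1 of integers. (For such sequences one automatically has k − m_i + i ≥ 1 for all i; when n = k the sum consists of a single empty product equal to 1.) -/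
open Finset

namespace GStirling

variable {n k : ℕ}

def tset (μ : Fin k → Fin n) (x : Fin n) : Finset (Finset (Fin k)) :=
  Finset.univ.filter (fun u => (∀ j, μ j = x → j ∈ u) ∧ (∀ j ∈ u, x ≤ μ j) ∧ u.Nonempty)

lemma transpose_card (μ : Fin k → Fin n) :
    (Finset.univ.filter (fun B : Fin k → Finset (Fin n) =>
      (∀ j, μ j ∈ B j) ∧ (∀ j, ∀ x ∈ B j, x ≤ μ j) ∧ (∀ x, ∃ j, x ∈ B j))).card
    = ∏ x : Fin n, (tset μ x).card := by
  classical
  rw [← Fintype.card_piFinset]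
  apply Finset.card_nbij' (fun B => fun x => Finset.univ.filter (fun j => x ∈ B j))
    (fun f => fun j => Finset.univ.filter (fun x => j ∈ f x))
  · intro B hB
    simp only [Finset.mem_coe, mem_filter, mem_univ, true_and] at hB
    obtain ⟨h1, h2, h3⟩ := hB
    simp only [Finset.mem_coe, Fintype.mem_piFinset, tset, mem_filter, mem_univ, true_and]
    intro x
    refine ⟨fun j hj => by simp [hj ▸ h1 j], fun j hj => h2 j x (by simpa using hj), ?_⟩
    obtain ⟨j, hj⟩ := h3 x
    exact ⟨j, by simp [hj]⟩
  · intro f hf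
    simp only [Finset.mem_coe, Fintype.mem_piFinset, tset, mem_filter, mem_univ, true_and] at hf
    simp only [Finset.mem_coe, mem_filter, mem_univ, true_and]
    refine ⟨fun j => by simpa using (hf (μ j)).1 j rfl,
      fun j x hx => (hf x).2.1 j (by simpa using hx), fun x => ?_⟩
    obtain ⟨j, hj⟩ := (hf x).2.2
    exact ⟨j, by simp [hj]⟩
  · intro B hB; funext j; ext x; simp
  · intro f hf; funext x; ext j; simp

lemma tset_card_max {μ : Fin k → Fin n} (hμ : StrictMono μ) (j : Fin k) :
    (tset μ (μ j)).card = 2 ^ (k - (j : ℕ) - 1) := by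
  classical
  have h1 : tset μ (μ j) = Finset.Icc {j} (Finset.univ.filter (fun j' => μ j ≤ μ j')) := by
    ext u
    simp only [tset, mem_filter, mem_univ, true_and, Finset.mem_Icc, Finset.le_eq_subset]
    constructor
    · rintro ⟨ha, hb, -⟩
      exact ⟨Finset.singleton_subset_iff.2 (ha j rfl),
        fun j' hj' => Finset.mem_filter.2 ⟨mem_univ j', hb j' hj'⟩⟩
    · rintro ⟨ha, hb⟩
      have hj : j ∈ u := Finset.singleton_subset_iff.1 ha
      exact ⟨fun j' hj' => by rwa [hμ.injective hj'],
        fun j' hj' => (Finset.mem_filter.1 (hb hj')).2, ⟨j, hj⟩⟩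
  have h2 : (Finset.univ.filter (fun j' => μ j ≤ μ j')) = Finset.Ici j := by
    ext j'; simp [hμ.le_iff_le, Finset.mem_Ici]
  have h3 : ({j} : Finset (Fin k)) ⊆ Finset.univ.filter (fun j' => μ j ≤ μ j') := by
    simp
  rw [h1, Finset.card_Icc_finset h3, h2, Fin.card_Ici, Finset.card_singleton]

lemma tset_card_nonmax {μ : Fin k → Fin n} {x : Fin n} (hx : ∀ j, μ j ≠ x) :
    (tset μ x).card = 2 ^ (Finset.univ.filter (fun j => x ≤ μ j)).card - 1 := by
  classical
  set S := Finset.univ.filter (fun j => x ≤ μ j) with hS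
  have h1 : tset μ x = S.powerset.filter (fun u => u.Nonempty) := by
    ext u
    simp only [tset, mem_filter, mem_univ, true_and, Finset.mem_powerset]
    constructor
    · rintro ⟨-, hb, hc⟩
      exact ⟨fun j hj => Finset.mem_filter.2 ⟨mem_univ j, hb j hj⟩, hc⟩
    · rintro ⟨ha, hb⟩
      exact ⟨fun j hj => absurd hj (hx j), fun j hj => (Finset.mem_filter.1 (ha hj)).2, hb⟩
  have h2 : S.powerset.filter (fun u => ¬ u.Nonempty) = {∅} := by
    ext u
    simp only [mem_filter, Finset.mem_powerset, Finset.not_nonempty_iff_eq_empty,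
      Finset.mem_singleton]
    constructor
    · rintro ⟨-, h⟩; exact h
    · rintro rfl; exact ⟨Finset.empty_subset _, rfl⟩
  have h3 := Finset.card_filter_add_card_filter_not
    (s := S.powerset) (p := fun u => u.Nonempty)
  simp only [h2, Finset.card_singleton, Finset.card_powerset] at h3
  rw [h1]
  omega

lemma sum_aux : ∑ j : Fin k, (k - (j : ℕ) - 1) = k.choose 2 := by
  rw [Fin.sum_univ_eq_sum_range (fun j => k - j - 1)]
  have h := Finset.sum_range_reflect (fun j => k - j - 1) k
  have h2 : ∑ j ∈ Finset.range k, (k - (k - 1 - j) - 1) = ∑ j ∈ Finset.range k, j :=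
    Finset.sum_congr rfl (fun j hj => by rw [Finset.mem_range] at hj; omega)
  rw [← h, h2, Finset.sum_range_id, Nat.choose_two_right]


def msf (m : Fin (n - k) → Fin n) (i : Fin (n - k)) : Fin n :=
  ⟨(m i : ℕ) - 1, lt_of_le_of_lt (Nat.sub_le _ _) (m i).isLt⟩

def fiberSet (m : Fin (n - k) → Fin n) : Finset (Fin k → Finset (Fin n)) :=
  Finset.univ.filter (fun B =>
    ((∀ i, (B i).Nonempty) ∧ Finset.univ.biUnion B = Finset.univ ∧
      ∀ i j : Fin k, i < j → (B i).max < (B j).max) ∧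
    ∀ j : Fin k, ∀ x : Fin n, (B j).max = ↑x → x ∉ Finset.image (msf m) Finset.univ)

lemma fiber_card (hk : 1 ≤ k) (hkn : k ≤ n)
    (m : Fin (n - k) → Fin n)
    (hmono : ∀ i j : Fin (n - k), i < j → m i < m j)
    (hbd : ∀ i, 1 ≤ (m i : ℕ) ∧ (m i : ℕ) ≤ n - 1) :
    (fiberSet m).card =
      2 ^ k.choose 2 * ∏ i : Fin (n - k), (2 ^ (k + ((i : ℕ) + 1) - (m i : ℕ)) - 1) := by
  classical
  have hn : 1 ≤ n := le_trans hk hkn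
  have hsm : StrictMono (msf m) := by
    intro i j hij
    have h1 := (hbd i).1
    have h2 := hmono i j hij
    rw [Fin.lt_def] at h2 ⊢
    simp only [msf]
    omega
  set N := Finset.image (msf m) Finset.univ with hN
  have hNcard : N.card = n - k := by
    rw [hN, Finset.card_image_of_injective _ hsm.injective, card_univ, Fintype.card_fin]
  set s := Finset.univ \ N with hs
  have hscard : s.card = k := by
    rw [hs, Finset.card_sdiff_of_subset (Finset.subset_univ N), card_univ, Fintype.card_fin, hNcard]
    omega
  set μ : Fin k → Fin n := ⇑(s.orderEmbOfFin hscard) with hμdef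
  have hμmono : StrictMono μ := (s.orderEmbOfFin hscard).strictMono
  have hμmem : ∀ j, μ j ∈ s := fun j => Finset.orderEmbOfFin_mem s hscard j
  have himg : Finset.image μ Finset.univ = s := by
    apply Finset.eq_of_subset_of_card_le
    · intro x hx
      obtain ⟨j, -, rfl⟩ := Finset.mem_image.1 hx
      exact hμmem j
    · rw [Finset.card_image_of_injective _ hμmono.injective, card_univ, Fintype.card_fin, hscard]
  have hA : fiberSet m = Finset.univ.filter (fun B : Fin k → Finset (Fin n) =>
      (∀ j, μ j ∈ B j) ∧ (∀ j, ∀ x ∈ B j, x ≤ μ j) ∧ (∀ x, ∃ j, x ∈ B j)) := by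
    ext B
    simp only [fiberSet, mem_filter, mem_univ, true_and]
    constructor
    · rintro ⟨⟨hne, hcov, hmax⟩, havoid⟩
      have hcov' : ∀ x : Fin n, ∃ j, x ∈ B j := by
        intro x
        have hx : x ∈ Finset.univ.biUnion B := by rw [hcov]; exact mem_univ x
        obtain ⟨j, -, hj⟩ := Finset.mem_biUnion.1 hx
        exact ⟨j, hj⟩
      have hco : ∀ j, (B j).max = ↑((B j).max' (hne j)) :=
        fun j => (Finset.coe_max' (hne j)).symm
      have hνmono : StrictMono (fun j => (B j).max' (hne j)) := by
        intro i j hij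
        have h := hmax i j hij
        rw [hco i, hco j] at h
        exact_mod_cast h
      have hνs : ∀ j, (B j).max' (hne j) ∈ s := by
        intro j
        rw [hs, Finset.mem_sdiff]
        exact ⟨mem_univ _, havoid j _ (hco j)⟩
      have hνμ : (fun j => (B j).max' (hne j)) = μ :=
        Finset.orderEmbOfFin_unique hscard hνs hνmono
      refine ⟨fun j => ?_, fun j x hx => ?_, hcov'⟩
      · rw [← congrFun hνμ j]; exact Finset.max'_mem _ _
      · rw [← congrFun hνμ j]; exact Finset.le_max' _ x hx
    · rintro ⟨hin, hle, hcov⟩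
      have hmaxeq : ∀ j, (B j).max = ↑(μ j) := by
        intro j
        apply le_antisymm
        · exact Finset.max_le (fun x hx => WithBot.coe_le_coe.2 (hle j x hx))
        · exact Finset.le_max (hin j)
      refine ⟨⟨fun j => ⟨μ j, hin j⟩, ?_, fun i j hij => ?_⟩, fun j x hx => ?_⟩
      · ext x
        simp only [Finset.mem_biUnion, mem_univ, iff_true]
        obtain ⟨j, hj⟩ := hcov x
        exact ⟨j, trivial, hj⟩
      · rw [hmaxeq i, hmaxeq j]
        exact_mod_cast hμmono hij
      · rw [hmaxeq j] at hx
        have hxe : x = μ j := by exact_mod_cast hx.symm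
        subst hxe
        have hjs := hμmem j
        rw [hs, Finset.mem_sdiff] at hjs
        exact hjs.2
  rw [hA, transpose_card μ, ← Finset.prod_sdiff (Finset.subset_univ N)]
  have hprod1 : ∏ x ∈ Finset.univ \ N, (tset μ x).card = 2 ^ k.choose 2 := by
    rw [← hs, ← himg, Finset.prod_image (fun a _ b _ h => hμmono.injective h)]
    calc ∏ j : Fin k, (tset μ (μ j)).card
        = ∏ j : Fin k, 2 ^ (k - (j : ℕ) - 1) :=
          Finset.prod_congr rfl (fun j _ => tset_card_max hμmono j)
      _ = 2 ^ ∑ j : Fin k, (k - (j : ℕ) - 1) := Finset.prod_pow_eq_pow_sum _ _ _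
      _ = 2 ^ k.choose 2 := by rw [sum_aux]
  have hprod2 : ∏ x ∈ N, (tset μ x).card
      = ∏ i : Fin (n - k), (2 ^ (k + ((i : ℕ) + 1) - (m i : ℕ)) - 1) := by
    rw [hN, Finset.prod_image (fun a _ b _ h => hsm.injective h)]
    apply Finset.prod_congr rfl
    intro i _
    have hxN : msf m i ∈ N := hN ▸ Finset.mem_image_of_mem _ (mem_univ i)
    have hxval : ((msf m i : Fin n) : ℕ) = (m i : ℕ) - 1 := rfl
    have hxs : ∀ j, μ j ≠ msf m i := by
      intro j h
      have hjs := hμmem j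
      rw [hs, Finset.mem_sdiff] at hjs
      exact hjs.2 (h ▸ hxN)
    rw [tset_card_nonmax hxs]
    have hScard : (Finset.univ.filter (fun j => msf m i ≤ μ j)).card
        = k + ((i : ℕ) + 1) - (m i : ℕ) := by
      have e1 : (Finset.univ.filter (fun y : Fin n => y < msf m i)).card = ((msf m i : Fin n) : ℕ) := by
        have h : (Finset.univ.filter (fun y : Fin n => y < msf m i)) = Finset.Iio (msf m i) := by
          ext y; simp [Finset.mem_Iio]
        rw [h, Fin.card_Iio]
      have e2 : (Finset.univ : Finset (Fin n)) = s ∪ N :=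
        (hs ▸ Finset.sdiff_union_of_subset (Finset.subset_univ N)).symm
      have e3 : (Finset.univ.filter (fun y : Fin n => y < msf m i)).card
          = (s.filter (fun y => y < msf m i)).card + (N.filter (fun y => y < msf m i)).card := by
        conv_lhs => rw [e2]
        rw [Finset.filter_union]
        exact Finset.card_union_of_disjoint
          (Disjoint.mono (Finset.filter_subset _ _) (Finset.filter_subset _ _)
            (hs ▸ Finset.sdiff_disjoint))
      have e4 : (N.filter (fun y => y < msf m i)).card = (i : ℕ) := by
        rw [hN, Finset.filter_image, Finset.card_image_of_injective _ hsm.injective]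
        have h : (Finset.univ.filter (fun j => msf m j < msf m i))
            = Finset.univ.filter (fun j => j < i) := by
          ext j
          simp only [mem_filter, mem_univ, true_and]
          exact hsm.lt_iff_lt
        rw [h]
        have h2 : (Finset.univ.filter (fun j : Fin (n - k) => j < i)) = Finset.Iio i := by
          ext j; simp [Finset.mem_Iio]
        rw [h2, Fin.card_Iio]
      have e5 : (Finset.univ.filter (fun j => μ j < msf m i)).card
          = (s.filter (fun y => y < msf m i)).card := by
        rw [← himg, Finset.filter_image, Finset.card_image_of_injective _ hμmono.injective]
      have e6 : (Finset.univ.filter (fun j => msf m i ≤ μ j)).card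
          + (Finset.univ.filter (fun j => μ j < msf m i)).card = k := by
        have h := Finset.card_filter_add_card_filter_not
          (s := Finset.univ) (p := fun j : Fin k => msf m i ≤ μ j)
        have hcong : (Finset.univ.filter (fun j : Fin k => ¬ msf m i ≤ μ j))
            = Finset.univ.filter (fun j => μ j < msf m i) := by
          ext j; simp [not_le]
        rw [hcong, card_univ, Fintype.card_fin] at h
        exact h
      have e7 : 1 ≤ (Finset.univ.filter (fun j => msf m i ≤ μ j)).card := by
        have htop : (⟨n - 1, by omega⟩ : Fin n) ∈ s := by
          rw [hs, Finset.mem_sdiff]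
          refine ⟨mem_univ _, fun hmem => ?_⟩
          rw [hN] at hmem
          obtain ⟨i', -, hi'⟩ := Finset.mem_image.1 hmem
          have hb1 := (hbd i').1
          have hb2 := (hbd i').2
          have hv : ((m i' : ℕ) - 1) = n - 1 := congrArg Fin.val hi'
          omega
        rw [← himg] at htop
        obtain ⟨j, -, hj⟩ := Finset.mem_image.1 htop
        refine Finset.card_pos.2 ⟨j, Finset.mem_filter.2 ⟨mem_univ j, ?_⟩⟩
        rw [hj, Fin.le_def]
        have hb2 := (hbd i).2
        have hb1 := (hbd i).1
        simp only [hxval]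
        omega
      have hb1 := (hbd i).1
      have hb2 := (hbd i).2
      omega
    rw [hScard]
  rw [hprod1, hprod2]


lemma maxes_strictMono {B : Fin k → Finset (Fin n)} (hne : ∀ i, (B i).Nonempty)
    (hmax : ∀ i j : Fin k, i < j → (B i).max < (B j).max) :
    StrictMono (fun j => (B j).max' (hne j)) := by
  intro i j hij
  have h := hmax i j hij
  rw [← Finset.coe_max' (hne i), ← Finset.coe_max' (hne j)] at h
  exact_mod_cast h

lemma fiber_disjoint (hk : 1 ≤ k) (hkn : k ≤ n) {m1 m2 : Fin (n - k) → Fin n}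
    (hb1 : ∀ i, 1 ≤ (m1 i : ℕ) ∧ (m1 i : ℕ) ≤ n - 1)
    (hm1 : ∀ i j : Fin (n - k), i < j → m1 i < m1 j)
    (hb2 : ∀ i, 1 ≤ (m2 i : ℕ) ∧ (m2 i : ℕ) ≤ n - 1)
    (hm2 : ∀ i j : Fin (n - k), i < j → m2 i < m2 j)
    (hne : m1 ≠ m2) : Disjoint (fiberSet m1) (fiberSet m2) := by
  classical
  rw [Finset.disjoint_left]
  intro B hB1 hB2
  exfalso
  apply hne
  simp only [fiberSet, mem_filter, mem_univ, true_and] at hB1 hB2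
  obtain ⟨⟨hBne, hBcov, hBmax⟩, hav1⟩ := hB1
  obtain ⟨⟨-, -, -⟩, hav2⟩ := hB2
  have hνmono := maxes_strictMono hBne hBmax
  set ν : Fin k → Fin n := fun j => (B j).max' (hBne j) with hν
  set I := Finset.image ν Finset.univ with hI
  have hIcard : I.card = k := by
    rw [hI, Finset.card_image_of_injective _ hνmono.injective, card_univ, Fintype.card_fin]
  have hkey : ∀ (m : Fin (n - k) → Fin n),
      (∀ i, 1 ≤ (m i : ℕ) ∧ (m i : ℕ) ≤ n - 1) →
      (∀ i j : Fin (n - k), i < j → m i < m j) →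
      (∀ j : Fin k, ∀ x : Fin n, (B j).max = ↑x → x ∉ Finset.image (msf m) Finset.univ) →
      Finset.image (msf m) Finset.univ = Finset.univ \ I := by
    intro m hb hm hav
    have hsm : StrictMono (msf m) := by
      intro i j hij
      have h1 := (hb i).1
      have h2 := hm i j hij
      rw [Fin.lt_def] at h2 ⊢
      simp only [msf]
      omega
    have hNcard : (Finset.image (msf m) Finset.univ).card = n - k := by
      rw [Finset.card_image_of_injective _ hsm.injective, card_univ, Fintype.card_fin]
    apply Finset.eq_of_subset_of_card_le
    · intro y hy
      rw [Finset.mem_sdiff]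
      refine ⟨mem_univ _, fun hyI => ?_⟩
      obtain ⟨j, -, rfl⟩ := Finset.mem_image.1 hyI
      exact hav j (ν j) (Finset.coe_max' (hBne j)).symm hy
    · rw [hNcard, Finset.card_sdiff_of_subset (Finset.subset_univ I), card_univ, Fintype.card_fin, hIcard]
  have heq : Finset.image (msf m1) Finset.univ = Finset.image (msf m2) Finset.univ := by
    rw [hkey m1 hb1 hm1 hav1, hkey m2 hb2 hm2 hav2]
  have hsm1 : StrictMono (msf m1) := by
    intro i j hij
    have h1 := (hb1 i).1
    have h2 := hm1 i j hij
    rw [Fin.lt_def] at h2 ⊢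
    simp only [msf]
    omega
  have hsm2 : StrictMono (msf m2) := by
    intro i j hij
    have h1 := (hb2 i).1
    have h2 := hm2 i j hij
    rw [Fin.lt_def] at h2 ⊢
    simp only [msf]
    omega
  have hNc : (Finset.image (msf m1) Finset.univ).card = n - k := by
    rw [Finset.card_image_of_injective _ hsm1.injective, card_univ, Fintype.card_fin]
  have hu1 : msf m1 = (Finset.image (msf m1) Finset.univ).orderEmbOfFin hNc :=
    Finset.orderEmbOfFin_unique hNc (fun i => Finset.mem_image_of_mem _ (mem_univ i)) hsm1
  have hu2 : msf m2 = (Finset.image (msf m1) Finset.univ).orderEmbOfFin hNc :=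
    Finset.orderEmbOfFin_unique hNc
      (fun i => heq ▸ Finset.mem_image_of_mem _ (mem_univ i)) hsm2
  have hmm : msf m1 = msf m2 := hu1.trans hu2.symm
  funext i
  have hv : ((msf m1 i : Fin n) : ℕ) = ((msf m2 i : Fin n) : ℕ) := by rw [hmm]
  simp only [msf] at hv
  have := (hb1 i).1
  have := (hb2 i).1
  exact Fin.ext (by omega)

lemma partition (hk : 1 ≤ k) (hkn : k ≤ n) :
    (Finset.univ.filter (fun B : Fin k → Finset (Fin n) =>
      (∀ i, (B i).Nonempty) ∧ Finset.univ.biUnion B = Finset.univ ∧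
      ∀ i j : Fin k, i < j → (B i).max < (B j).max))
    = (Finset.univ.filter (fun m : Fin (n - k) → Fin n =>
        (∀ i j : Fin (n - k), i < j → m i < m j) ∧
        ∀ i, 1 ≤ (m i : ℕ) ∧ (m i : ℕ) ≤ n - 1)).biUnion fiberSet := by
  classical
  have hn : 1 ≤ n := le_trans hk hkn
  ext B
  simp only [mem_filter, mem_univ, true_and, Finset.mem_biUnion]
  constructor
  · rintro ⟨hne, hcov, hmax⟩
    have hνmono := maxes_strictMono hne hmax
    set ν : Fin k → Fin n := fun j => (B j).max' (hne j) with hν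
    set I := Finset.image ν Finset.univ with hI
    have hIcard : I.card = k := by
      rw [hI, Finset.card_image_of_injective _ hνmono.injective, card_univ, Fintype.card_fin]
    set C := Finset.univ \ I with hC
    have hCcard : C.card = n - k := by
      rw [hC, Finset.card_sdiff_of_subset (Finset.subset_univ I), card_univ, Fintype.card_fin, hIcard]
    have htop : (⟨n - 1, by omega⟩ : Fin n) ∈ I := by
      have hx : (⟨n - 1, by omega⟩ : Fin n) ∈ Finset.univ.biUnion B := by
        rw [hcov]; exact mem_univ _
      obtain ⟨j, -, hj⟩ := Finset.mem_biUnion.1 hx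
      have h1 : (⟨n - 1, by omega⟩ : Fin n) ≤ ν j := Finset.le_max' _ _ hj
      have h2 : ν j ≤ (⟨n - 1, by omega⟩ : Fin n) := by
        rw [Fin.le_def]
        have := (ν j).isLt
        simp only []
        omega
      have : ν j = (⟨n - 1, by omega⟩ : Fin n) := le_antisymm h2 h1
      rw [← this, hI]
      exact Finset.mem_image_of_mem _ (mem_univ j)
    have hClt : ∀ y ∈ C, (y : ℕ) < n - 1 := by
      intro y hy
      rw [hC, Finset.mem_sdiff] at hy
      have hyne : y ≠ (⟨n - 1, by omega⟩ : Fin n) := fun h => hy.2 (h ▸ htop)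
      have : (y : ℕ) ≠ n - 1 := fun h => hyne (Fin.ext h)
      have := y.isLt
      omega
    refine ⟨fun i => ⟨((C.orderEmbOfFin hCcard i : Fin n) : ℕ) + 1, by
        have := hClt _ (Finset.orderEmbOfFin_mem C hCcard i); omega⟩, ⟨?_, ?_⟩, ?_⟩
    · intro i j hij
      rw [Fin.lt_def]
      have := (C.orderEmbOfFin hCcard).strictMono hij
      rw [Fin.lt_def] at this
      simp only []
      omega
    · intro i
      have := hClt _ (Finset.orderEmbOfFin_mem C hCcard i)
      simp only []
      omega
    · simp only [fiberSet, mem_filter, mem_univ, true_and]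
      refine ⟨⟨hne, hcov, hmax⟩, ?_⟩
      have hmsf : ∀ i, msf (fun i => (⟨((C.orderEmbOfFin hCcard i : Fin n) : ℕ) + 1, by
          have := hClt _ (Finset.orderEmbOfFin_mem C hCcard i); omega⟩ : Fin n)) i
          = C.orderEmbOfFin hCcard i := by
        intro i
        apply Fin.ext
        simp only [msf]
        omega
      have himgC : Finset.image (msf (fun i => (⟨((C.orderEmbOfFin hCcard i : Fin n) : ℕ) + 1, by
          have := hClt _ (Finset.orderEmbOfFin_mem C hCcard i); omega⟩ : Fin n))) Finset.univ
          = C := by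
        apply Finset.eq_of_subset_of_card_le
        · intro y hy
          obtain ⟨i, -, rfl⟩ := Finset.mem_image.1 hy
          rw [hmsf i]
          exact Finset.orderEmbOfFin_mem C hCcard i
        · rw [hCcard]
          have hinj : Function.Injective (msf (fun i =>
              (⟨((C.orderEmbOfFin hCcard i : Fin n) : ℕ) + 1, by
                have := hClt _ (Finset.orderEmbOfFin_mem C hCcard i); omega⟩ : Fin n))) := by
            intro a b hab
            rw [hmsf a, hmsf b] at hab
            exact (C.orderEmbOfFin hCcard).injective hab
          rw [Finset.card_image_of_injective _ hinj, card_univ, Fintype.card_fin]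
      rw [himgC]
      intro j x hx
      have hxv : x = ν j := by
        rw [← Finset.coe_max' (hne j)] at hx
        exact_mod_cast hx.symm
      subst hxv
      rw [hC, Finset.mem_sdiff]
      push_neg
      intro
      rw [hI]
      exact Finset.mem_image_of_mem _ (mem_univ j)
  · rintro ⟨m, -, hBm⟩
    simp only [fiberSet, mem_filter, mem_univ, true_and] at hBm
    exact hBm.1

end GStirling


/-- For `n ≥ k ≥ 1`,
`\overline{S}(n,k) = 2^{C(k,2)} · Σ Π_{i=1}^{n−k} (2^{k−m_i+i} − 1)`, the sum being over
all strictly increasing sequences `1 ≤ m₁ < m₂ < ⋯ < m_{n−k} ≤ n−1`.  Here the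
sequence is encoded as a strictly monotone map `m : Fin (n−k) → Fin n` whose values
satisfy `1 ≤ m i ≤ n−1`, the entry `m_i` (with `1`-based index `i`) being `m ⟨i−1⟩`,
and the exponent `k − m_i + i` is written as `k + ((i−1) + 1) − m_i`. -/
theorem stmt11 (n k : ℕ) (hk : 1 ≤ k) (hkn : k ≤ n) :
    gstirling n k = 2 ^ k.choose 2 *
      ∑ m ∈ Finset.univ.filter (fun m : Fin (n - k) → Fin n =>
          (∀ i j : Fin (n - k), i < j → m i < m j) ∧
          ∀ i, 1 ≤ (m i : ℕ) ∧ (m i : ℕ) ≤ n - 1),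
        ∏ i : Fin (n - k), (2 ^ (k + ((i : ℕ) + 1) - (m i : ℕ)) - 1) := by

  rw [Finset.mul_sum]
  unfold gstirling
  rw [GStirling.partition hk hkn, Finset.card_biUnion (fun m1 h1 m2 h2 hne =>
    GStirling.fiber_disjoint hk hkn (Finset.mem_filter.1 h1).2.2 (Finset.mem_filter.1 h1).2.1
      (Finset.mem_filter.1 h2).2.2 (Finset.mem_filter.1 h2).2.1 hne)]
  apply Finset.sum_congr rfl
  intro m hm
  obtain ⟨-, hmono, hbd⟩ := Finset.mem_filter.1 hm
  exact GStirling.fiber_card hk hkn m hmono hbd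
end

section
/- For every integer n ≥ 1, \overline{S}(n,2) = 3^{n−1} − 1. -/
private def gsFwd (m : ℕ) (B : Fin 2 → Finset (Fin (m+1))) : Fin m → Fin 3 :=
  fun i => if i.castSucc ∈ B 0 then (if i.castSucc ∈ B 1 then 2 else 0) else 1

private def gsBwd (m : ℕ) (f : Fin m → Fin 3) : Fin 2 → Finset (Fin (m+1)) :=
  fun k => if k = 0 then
    Finset.univ.filter (fun x : Fin (m+1) => ∃ h : x ≠ Fin.last m, f (x.castPred h) ≠ 1)
  else
    Finset.univ.filter (fun x : Fin (m+1) => x = Fin.last m ∨ ∃ h : x ≠ Fin.last m, f (x.castPred h) ≠ 0)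

private lemma mem_gsBwd0 {m : ℕ} {f : Fin m → Fin 3} {x : Fin (m+1)} :
    x ∈ gsBwd m f 0 ↔ ∃ h : x ≠ Fin.last m, f (x.castPred h) ≠ 1 := by
  simp [gsBwd]

private lemma mem_gsBwd1 {m : ℕ} {f : Fin m → Fin 3} {x : Fin (m+1)} :
    x ∈ gsBwd m f 1 ↔ (x = Fin.last m ∨ ∃ h : x ≠ Fin.last m, f (x.castPred h) ≠ 0) := by
  simp only [gsBwd, if_neg (by decide : (1 : Fin 2) ≠ 0), Finset.mem_filter,
    Finset.mem_univ, true_and]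

private lemma gstirling_struct {m : ℕ} (B : Fin 2 → Finset (Fin (m+1)))
    (h : (∀ i, (B i).Nonempty) ∧ Finset.univ.biUnion B = Finset.univ ∧
      ∀ i j : Fin 2, i < j → (B i).max < (B j).max) :
    Fin.last m ∉ B 0 ∧ Fin.last m ∈ B 1 := by
  obtain ⟨h1, h2, h3⟩ := h
  have hlt := h3 0 1 (by decide)
  have hnot : Fin.last m ∉ B 0 := by
    intro hmem
    have hle : (↑(Fin.last m) : WithBot (Fin (m+1))) ≤ (B 0).max := Finset.le_max hmem
    have hle2 : (B 1).max ≤ (↑(Fin.last m) : WithBot (Fin (m+1))) :=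
      Finset.max_le (fun a _ => by exact_mod_cast Fin.le_last a)
    exact absurd hlt (not_lt.2 (hle2.trans hle))
  refine ⟨hnot, ?_⟩
  have : Fin.last m ∈ Finset.univ.biUnion B := by rw [h2]; exact Finset.mem_univ _
  obtain ⟨i, _, hi⟩ := Finset.mem_biUnion.1 this
  fin_cases i
  · exact absurd hi hnot
  · exact hi

/-- `\overline{S}(n,2) = 3^{n−1} − 1` for every `n ≥ 1`. -/
theorem stmt12 (n : ℕ) (hn : 1 ≤ n) : gstirling n 2 = 3 ^ (n - 1) - 1 := by
  obtain ⟨m, rfl⟩ : ∃ m, n = m + 1 := ⟨n - 1, by omega⟩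
  have hcard : gstirling (m+1) 2
      = ((Finset.univ : Finset (Fin m → Fin 3)).erase (fun _ => 1)).card := by
    unfold gstirling
    refine Finset.card_bij' (fun B _ => gsFwd m B) (fun f _ => gsBwd m f) ?_ ?_ ?_ ?_
    · -- maps into erase
      intro B hB
      rw [Finset.mem_filter] at hB
      obtain ⟨hlast0, _⟩ := gstirling_struct B hB.2
      obtain ⟨x, hx⟩ := hB.2.1 0
      have hxne : x ≠ Fin.last m := fun h => hlast0 (h ▸ hx)
      refine Finset.mem_erase.2 ⟨?_, Finset.mem_univ _⟩
      intro heq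
      have h1 : gsFwd m B (x.castPred hxne) = 1 := congrFun heq (x.castPred hxne)
      rw [gsFwd, Fin.castSucc_castPred, if_pos hx] at h1
      split at h1 <;> simp at h1
    · -- maps back into filter
      intro f hf
      have hne : ∃ i, f i ≠ 1 := Function.ne_iff.1 (Finset.ne_of_mem_erase hf)
      obtain ⟨i, hi⟩ := hne
      have hci : (i.castSucc : Fin (m+1)) ≠ Fin.last m := (Fin.castSucc_lt_last i).ne
      refine Finset.mem_filter.2 ⟨Finset.mem_univ _, ?_, ?_, ?_⟩
      · intro k
        fin_cases k
        · exact ⟨i.castSucc, mem_gsBwd0.2 ⟨hci, by rwa [Fin.castPred_castSucc]⟩⟩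
        · exact ⟨Fin.last m, mem_gsBwd1.2 (Or.inl rfl)⟩
      · ext x
        simp only [Finset.mem_biUnion, Finset.mem_univ, iff_true, true_and]
        by_cases hx : x = Fin.last m
        · exact ⟨1, mem_gsBwd1.2 (Or.inl hx)⟩
        · by_cases hv : f (x.castPred hx) ≠ 1
          · exact ⟨0, mem_gsBwd0.2 ⟨hx, hv⟩⟩
          · push_neg at hv
            exact ⟨1, mem_gsBwd1.2 (Or.inr ⟨hx, by rw [hv]; decide⟩)⟩
      · intro a b hab
        fin_cases a <;> fin_cases b
        · exact absurd hab (by decide)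
        · show (gsBwd m f 0).max < (gsBwd m f 1).max
          have hmem1 : Fin.last m ∈ gsBwd m f 1 := mem_gsBwd1.2 (Or.inl rfl)
          have hmax1 : (gsBwd m f 1).max = (↑(Fin.last m) : WithBot (Fin (m+1))) :=
            le_antisymm (Finset.max_le fun a _ => by exact_mod_cast Fin.le_last a)
              (Finset.le_max hmem1)
          rw [hmax1]
          have hle : (gsBwd m f 0).max ≤ (↑(Fin.last m) : WithBot (Fin (m+1))) :=
            Finset.max_le fun a _ => by exact_mod_cast Fin.le_last a
          refine lt_of_le_of_ne hle ?_
          intro hmax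
          obtain ⟨h, -⟩ := mem_gsBwd0.1 (Finset.mem_of_max hmax)
          exact h rfl
        · exact absurd hab (by decide)
        · exact absurd hab (by decide)
    · -- left inverse
      intro B hB
      rw [Finset.mem_filter] at hB
      obtain ⟨hlast0, hlast1⟩ := gstirling_struct B hB.2
      obtain ⟨-, -, hcover, -⟩ := hB
      funext k
      fin_cases k
      · show gsBwd m (gsFwd m B) 0 = B 0
        ext x
        rw [mem_gsBwd0]
        constructor
        · rintro ⟨h, hne⟩
          rw [gsFwd, Fin.castSucc_castPred] at hne
          by_contra hx0
          rw [if_neg hx0] at hne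
          exact hne rfl
        · intro hx0
          have hxne : x ≠ Fin.last m := fun h => hlast0 (h ▸ hx0)
          refine ⟨hxne, ?_⟩
          rw [gsFwd, Fin.castSucc_castPred, if_pos hx0]
          split <;> decide
      · show gsBwd m (gsFwd m B) 1 = B 1
        ext x
        rw [mem_gsBwd1]
        constructor
        · rintro (rfl | ⟨h, hne⟩)
          · exact hlast1
          · rw [gsFwd, Fin.castSucc_castPred] at hne
            by_cases hx0 : x ∈ B 0
            · rw [if_pos hx0] at hne
              by_contra hx1
              rw [if_neg hx1] at hne
              exact hne rfl
            · have : x ∈ Finset.univ.biUnion B := by rw [hcover]; exact Finset.mem_univ _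
              obtain ⟨i, -, hi⟩ := Finset.mem_biUnion.1 this
              fin_cases i
              · exact absurd hi hx0
              · exact hi
        · intro hx1
          by_cases hx : x = Fin.last m
          · exact Or.inl hx
          · refine Or.inr ⟨hx, ?_⟩
            rw [gsFwd, Fin.castSucc_castPred]
            by_cases hx0 : x ∈ B 0 <;> simp [hx0, hx1]
    · -- right inverse
      intro f hf
      funext i
      have hci : (i.castSucc : Fin (m+1)) ≠ Fin.last m := (Fin.castSucc_lt_last i).ne
      have hm0 : i.castSucc ∈ gsBwd m f 0 ↔ f i ≠ 1 := by
        rw [mem_gsBwd0]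
        constructor
        · rintro ⟨h, hne⟩; rwa [Fin.castPred_castSucc] at hne
        · intro h; exact ⟨hci, by rwa [Fin.castPred_castSucc]⟩
      have hm1 : i.castSucc ∈ gsBwd m f 1 ↔ f i ≠ 0 := by
        rw [mem_gsBwd1]
        constructor
        · rintro (h | ⟨h, hne⟩)
          · exact absurd h hci
          · rwa [Fin.castPred_castSucc] at hne
        · intro h; exact Or.inr ⟨hci, by rwa [Fin.castPred_castSucc]⟩
      show gsFwd m (gsBwd m f) i = f i
      rw [gsFwd]
      by_cases h0 : f i ≠ 1
      · rw [if_pos (hm0.2 h0)]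
        by_cases h1 : f i ≠ 0
        · rw [if_pos (hm1.2 h1)]
          omega
        · rw [if_neg (fun h => h1 (hm1.1 h))]
          push_neg at h1
          exact h1.symm
      · rw [if_neg (fun h => h0 (hm0.1 h))]
        push_neg at h0
        exact h0.symm
  rw [hcard, Finset.card_erase_of_mem (Finset.mem_univ _), Finset.card_univ]
  simp
end

section
/- For every integer n ≥ 1, \overline{S}(n, n−1) = 2^{C(n−1,2)} · (2^n − n − 1), where C(n−1,2) = (n−1)(n−2)/2. -/
namespace Stmt13Aux
open Finset

variable {α : Type*} [DecidableEq α]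

/-- The subsets of `u` containing `a`. -/
def withElem (u : Finset α) (a : α) : Finset (Finset α) :=
  (u.erase a).powerset.image (insert a)

lemma mem_withElem {u s : Finset α} {a : α} (ha : a ∈ u) :
    s ∈ withElem u a ↔ s ⊆ u ∧ a ∈ s := by
  simp only [withElem, mem_image, mem_powerset]
  constructor
  · rintro ⟨t, ht, rfl⟩
    refine ⟨?_, mem_insert_self _ _⟩
    intro x hx
    rcases mem_insert.1 hx with rfl | hx
    · exact ha
    · exact mem_of_mem_erase (ht hx)
  · rintro ⟨hsu, has⟩
    refine ⟨s.erase a, ?_, insert_erase has⟩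
    intro x hx
    exact mem_erase.2 ⟨(mem_erase.1 hx).1, hsu (mem_erase.1 hx).2⟩

lemma card_withElem (u : Finset α) (a : α) :
    (withElem u a).card = 2 ^ (u.erase a).card := by
  rw [withElem, card_image_of_injOn, card_powerset]
  intro s hs t ht hst
  simp only [coe_powerset, Set.mem_setOf_eq] at hs ht
  have has : a ∉ s := fun h => notMem_erase a u (hs h)
  have hat : a ∉ t := fun h => notMem_erase a u (ht h)
  calc s = (insert a s).erase a := (erase_insert has).symm
    _ = (insert a t).erase a := by rw [hst]
    _ = t := erase_insert hat

lemma max_eq_iff {n : ℕ} {s : Finset (Fin n)} {m : Fin n} :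
    s.max = (m : WithBot (Fin n)) ↔ m ∈ s ∧ s ⊆ Iic m := by
  constructor
  · intro h
    refine ⟨Finset.mem_of_max h, fun x hx => Finset.mem_Iic.2 ?_⟩
    have hx' := Finset.le_max hx
    rw [h] at hx'
    exact_mod_cast hx'
  · rintro ⟨hm, hs⟩
    refine le_antisymm (Finset.max_le fun x hx => ?_) (Finset.le_max hm)
    exact_mod_cast Finset.mem_Iic.1 (hs hx)

/-- The `i`-th element of `Fin (k+1)` when `t` is skipped. -/
def mfin (k : ℕ) (t : Fin (k + 1)) (i : Fin k) : Fin (k + 1) :=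
  if (i : ℕ) < (t : ℕ) then i.castSucc else i.succ

lemma mfin_val (k : ℕ) (t : Fin (k + 1)) (i : Fin k) :
    ((mfin k t i : Fin (k + 1)) : ℕ) = if (i : ℕ) < (t : ℕ) then (i : ℕ) else (i : ℕ) + 1 := by
  unfold mfin; split <;> simp

def Pred (k : ℕ) (B : Fin k → Finset (Fin (k + 1))) : Prop :=
  (∀ i, (B i).Nonempty) ∧ Finset.univ.biUnion B = Finset.univ ∧
    ∀ i j : Fin k, i < j → (B i).max < (B j).max

def Qt (k : ℕ) (t : Fin (k + 1)) (B : Fin k → Finset (Fin (k + 1))) : Prop :=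
  (∀ i, (B i).max = (mfin k t i : WithBot (Fin (k + 1)))) ∧ ∃ i, t ∈ B i

lemma Qt_imp_Pred {k : ℕ} {t : Fin (k + 1)} {B : Fin k → Finset (Fin (k + 1))}
    (h : Qt k t B) : Pred k B := by
  obtain ⟨hmax, i0, hi0⟩ := h
  have hmem : ∀ i, mfin k t i ∈ B i ∧ B i ⊆ Iic (mfin k t i) :=
    fun i => max_eq_iff.1 (hmax i)
  refine ⟨fun i => ⟨_, (hmem i).1⟩, ?_, ?_⟩
  · ext x
    simp only [mem_biUnion, mem_univ, true_and, iff_true]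
    by_cases hxt : x = t
    · exact ⟨i0, hxt ▸ hi0⟩
    · have hxk : (x : ℕ) ≤ k := Nat.lt_succ_iff.1 x.isLt
      by_cases hlt : (x : ℕ) < (t : ℕ)
      · have hxlt : (x : ℕ) < k := lt_of_lt_of_le hlt (Nat.lt_succ_iff.1 t.isLt)
        refine ⟨⟨(x : ℕ), hxlt⟩, ?_⟩
        have heq : mfin k t ⟨(x : ℕ), hxlt⟩ = x := by
          apply Fin.ext
          rw [mfin_val]
          simp [hlt]
        have hh := (hmem ⟨(x : ℕ), hxlt⟩).1
        rwa [heq] at hh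
      · have hne : (x : ℕ) ≠ (t : ℕ) := fun h => hxt (Fin.ext h)
        have hxt' : (t : ℕ) < (x : ℕ) := by omega
        have hxlt : (x : ℕ) - 1 < k := by omega
        refine ⟨⟨(x : ℕ) - 1, hxlt⟩, ?_⟩
        have heq : mfin k t ⟨(x : ℕ) - 1, hxlt⟩ = x := by
          apply Fin.ext
          rw [mfin_val]
          simp only
          rw [if_neg (by omega)]
          omega
        have hh := (hmem ⟨(x : ℕ) - 1, hxlt⟩).1
        rwa [heq] at hh
  · intro i j hij
    rw [hmax i, hmax j, WithBot.coe_lt_coe]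
    have hij' : (i : ℕ) < (j : ℕ) := hij
    rw [Fin.lt_def, mfin_val, mfin_val]
    split <;> split <;> omega

lemma Pred_imp_Qt {k : ℕ} {B : Fin k → Finset (Fin (k + 1))}
    (h : Pred k B) : ∃ t, Qt k t B := by
  classical
  obtain ⟨h1, h2, h3⟩ := h
  set f : Fin k → Fin (k + 1) := fun i => (B i).max' (h1 i) with hf_def
  have hmaxf : ∀ i, (B i).max = (f i : WithBot (Fin (k + 1))) :=
    fun i => (Finset.coe_max' (h1 i)).symm
  have hf : ∀ i j : Fin k, i < j → (f i : ℕ) < (f j : ℕ) := by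
    intro i j hij
    have := h3 i j hij
    rw [hmaxf i, hmaxf j, WithBot.coe_lt_coe] at this
    exact this
  have flo : ∀ (m : ℕ) (hm : m < k), m ≤ (f ⟨m, hm⟩ : ℕ) := by
    intro m
    induction m with
    | zero => intro hm; exact Nat.zero_le _
    | succ m ih =>
      intro hm
      have hm' : m < k := by omega
      have h1' := hf ⟨m, hm'⟩ ⟨m + 1, hm⟩ (by simp [Fin.lt_def])
      have h2' := ih hm'
      omega
  have fhi0 : ∀ (j m : ℕ) (hm : m < k), m + j + 1 = k → (f ⟨m, hm⟩ : ℕ) ≤ m + 1 := by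
    intro j
    induction j with
    | zero =>
      intro m hm hmk
      have := (f ⟨m, hm⟩).isLt
      omega
    | succ j ih =>
      intro m hm hmk
      have hm1 : m + 1 < k := by omega
      have h2' := ih (m + 1) hm1 (by omega)
      have h1' := hf ⟨m, hm⟩ ⟨m + 1, hm1⟩ (by simp [Fin.lt_def])
      omega
  have fhi : ∀ (m : ℕ) (hm : m < k), (f ⟨m, hm⟩ : ℕ) ≤ m + 1 :=
    fun m hm => fhi0 (k - 1 - m) m hm (by omega)
  have hex : ∃ m : ℕ, m = k ∨ ∃ hm : m < k, ((f ⟨m, hm⟩ : Fin (k + 1)) : ℕ) ≠ m :=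
    ⟨k, Or.inl rfl⟩
  set tn := Nat.find hex with htn_def
  have htk : tn ≤ k := Nat.find_le (Or.inl rfl)
  have hspec : tn = k ∨ ∃ hm : tn < k, ((f ⟨tn, hm⟩ : Fin (k + 1)) : ℕ) ≠ tn :=
    Nat.find_spec hex
  have hmin : ∀ m, m < tn → m ≠ k ∧ ∀ hm : m < k, ((f ⟨m, hm⟩ : Fin (k + 1)) : ℕ) = m := by
    intro m hm
    have := Nat.find_min hex hm
    push_neg at this
    exact this
  have fvals_ge : ∀ m, tn ≤ m → ∀ hm : m < k, ((f ⟨m, hm⟩ : Fin (k + 1)) : ℕ) = m + 1 := by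
    intro m hm
    induction m, hm using Nat.le_induction with
    | base =>
      intro hm
      rcases hspec with h | ⟨hm', hne⟩
      · omega
      · have := flo tn hm'
        have := fhi tn hm'
        omega
    | succ m hmt ih =>
      intro hm
      have hm' : m < k := by omega
      have h1' := hf ⟨m, hm'⟩ ⟨m + 1, hm⟩ (by simp [Fin.lt_def])
      have h2' := ih hm'
      have h3' := fhi (m + 1) hm
      omega
  refine ⟨⟨tn, by omega⟩, ?_, ?_⟩
  · intro i
    rw [hmaxf i]
    congr 1
    apply Fin.ext
    rw [mfin_val]
    simp only
    by_cases hc : (i : ℕ) < tn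
    · rw [if_pos hc]
      have := (hmin (i : ℕ) hc).2 i.isLt
      simpa using this
    · rw [if_neg hc]
      have := fvals_ge (i : ℕ) (not_lt.1 hc) i.isLt
      simpa using this
  · have : (⟨tn, by omega⟩ : Fin (k + 1)) ∈ Finset.univ.biUnion B := by
      rw [h2]; exact mem_univ _
    obtain ⟨i, _, hi⟩ := mem_biUnion.1 this
    exact ⟨i, hi⟩

lemma Qt_unique {k : ℕ} {t s : Fin (k + 1)} {B : Fin k → Finset (Fin (k + 1))}
    (ht : Qt k t B) (hs : Qt k s B) : t = s := by
  have hsame : ∀ i : Fin k, (mfin k t i : ℕ) = (mfin k s i : ℕ) := by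
    intro i
    have h1 := (ht.1 i).symm.trans (hs.1 i)
    have : mfin k t i = mfin k s i := by exact_mod_cast h1
    exact congrArg Fin.val this
  have key : ∀ a b : Fin (k + 1), (∀ i : Fin k, (mfin k a i : ℕ) = (mfin k b i : ℕ)) →
      ¬ ((a : ℕ) < (b : ℕ)) := by
    intro a b hab hlt
    have hak : (a : ℕ) < k := lt_of_lt_of_le hlt (Nat.lt_succ_iff.1 b.isLt)
    have := hab ⟨(a : ℕ), hak⟩
    rw [mfin_val, mfin_val] at this
    simp only at this
    rw [if_neg (lt_irrefl _), if_pos hlt] at this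
    omega
  have h1 := key t s hsame
  have h2 := key s t (fun i => (hsame i).symm)
  apply Fin.ext
  omega

lemma sum_range_ite (t k : ℕ) (htk : t ≤ k) :
    ∑ m ∈ range k, (if m < t then m else m + 1) = k.choose 2 + (k - t) := by
  have h1 : ∀ m ∈ range k, (if m < t then m else m + 1) = m + (if t ≤ m then 1 else 0) := by
    intro m _
    split_ifs <;> omega
  rw [Finset.sum_congr rfl h1, Finset.sum_add_distrib]
  have h2 : ∑ m ∈ range k, (if t ≤ m then 1 else 0) = k - t := by
    rw [← Finset.sum_filter]
    rw [Finset.sum_const, smul_eq_mul, mul_one]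
    have : (range k).filter (fun m => t ≤ m) = Ico t k := by
      ext m
      simp only [mem_filter, mem_range, mem_Ico]
      omega
    rw [this, Nat.card_Ico]
  rw [h2, Finset.sum_range_id, Nat.choose_two_right]

lemma geo (k : ℕ) : ∑ t ∈ range (k + 1), (2 ^ (k - t) - 1) = 2 ^ (k + 1) - k - 2 := by
  induction k with
  | zero => simp
  | succ k ih =>
    rw [Finset.sum_range_succ' (fun t => 2 ^ (k + 1 - t) - 1) (k + 1)]
    have h1 : ∀ t ∈ range (k + 1), 2 ^ (k + 1 - (t + 1)) - 1 = 2 ^ (k - t) - 1 := by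
      intro t _; congr 2; omega
    rw [Finset.sum_congr rfl h1, ih]
    have h2 : k + 2 ≤ 2 ^ (k + 1) := Nat.lt_two_pow_self (n := k + 1)
    have h3 : (2 : ℕ) ^ (k + 2) = 2 * 2 ^ (k + 1) := by ring
    simp only [Nat.sub_zero]
    omega

lemma card_Qt (k : ℕ) (t : Fin (k + 1)) [DecidablePred (Qt k t)] :
    (Finset.univ.filter (Qt k t)).card = 2 ^ k.choose 2 * (2 ^ (k - (t : ℕ)) - 1) := by
  classical
  set M : Fin k → Fin (k + 1) := fun i => mfin k t i with hM
  have hMne : ∀ i : Fin k, M i ≠ t := by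
    intro i h
    have := congrArg Fin.val h
    rw [hM] at this
    simp only [mfin_val] at this
    split at this <;> omega
  set T : Finset (Fin k → Finset (Fin (k + 1))) :=
    Finset.univ.filter (fun B => ∀ i, (B i).max = (M i : WithBot (Fin (k + 1)))) with hT
  -- T as a piFinset
  have hTcard : T.card = 2 ^ (k.choose 2 + (k - (t : ℕ))) := by
    have hTeq : T = Fintype.piFinset (fun i => withElem (Iic (M i)) (M i)) := by
      ext B
      simp only [hT, mem_filter, mem_univ, true_and, Fintype.mem_piFinset]
      refine forall_congr' fun i => ?_
      rw [max_eq_iff, mem_withElem (mem_Iic.2 le_rfl)]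
      tauto
    rw [hTeq, Fintype.card_piFinset]
    have hc : ∀ i : Fin k, (withElem (Iic (M i)) (M i)).card = 2 ^ ((M i : ℕ)) := by
      intro i
      rw [card_withElem, card_erase_of_mem (mem_Iic.2 le_rfl), Fin.card_Iic]
      simp
    rw [Finset.prod_congr rfl (fun i _ => hc i), Finset.prod_pow_eq_pow_sum]
    congr 1
    have : ∀ i : Fin k, (M i : ℕ) = (fun m => if m < (t : ℕ) then m else m + 1) (i : ℕ) := by
      intro i; rw [hM]; simp only [mfin_val]
    rw [Finset.sum_congr rfl (fun i _ => this i),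
      Fin.sum_univ_eq_sum_range (fun m => if m < (t : ℕ) then m else m + 1) k,
      sum_range_ite _ _ (Nat.lt_succ_iff.1 t.isLt)]
  -- bad part
  have hBadcard : (T.filter (fun B => ¬ ∃ i, t ∈ B i)).card = 2 ^ k.choose 2 := by
    have hBeq : T.filter (fun B => ¬ ∃ i, t ∈ B i) =
        Fintype.piFinset (fun i => withElem ((Iic (M i)).erase t) (M i)) := by
      ext B
      simp only [hT, mem_filter, mem_univ, true_and, Fintype.mem_piFinset, not_exists]
      have hmm : ∀ i : Fin k, M i ∈ (Iic (M i)).erase t :=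
        fun i => mem_erase.2 ⟨hMne i, mem_Iic.2 le_rfl⟩
      constructor
      · rintro ⟨hmax, hnt⟩ i
        rw [mem_withElem (hmm i), subset_erase]
        have := max_eq_iff.1 (hmax i)
        exact ⟨⟨this.2, hnt i⟩, this.1⟩
      · intro hB
        constructor
        · intro i
          have := (mem_withElem (hmm i)).1 (hB i)
          rw [subset_erase] at this
          exact max_eq_iff.2 ⟨this.2, this.1.1⟩
        · intro i
          have := (mem_withElem (hmm i)).1 (hB i)
          rw [subset_erase] at this
          exact this.1.2
    rw [hBeq, Fintype.card_piFinset]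
    have hc : ∀ i : Fin k, (withElem ((Iic (M i)).erase t) (M i)).card = 2 ^ ((i : ℕ)) := by
      intro i
      rw [card_withElem]
      congr 1
      by_cases hit : (i : ℕ) < (t : ℕ)
      · have hMi : (M i : ℕ) = (i : ℕ) := by rw [hM]; simp [mfin_val, hit]
        have htnot : t ∉ Iic (M i) := by
          rw [mem_Iic]
          intro h
          have : (t : ℕ) ≤ (M i : ℕ) := h
          omega
        rw [erase_eq_of_notMem htnot, card_erase_of_mem (mem_Iic.2 le_rfl), Fin.card_Iic]
        omega
      · have hMi : (M i : ℕ) = (i : ℕ) + 1 := by rw [hM]; simp [mfin_val, hit]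
        have htin : t ∈ Iic (M i) := by
          rw [mem_Iic]
          show (t : ℕ) ≤ (M i : ℕ)
          omega
        rw [card_erase_of_mem (mem_erase.2 ⟨hMne i, mem_Iic.2 le_rfl⟩),
          card_erase_of_mem htin, Fin.card_Iic]
        omega
    rw [Finset.prod_congr rfl (fun i _ => hc i), Finset.prod_pow_eq_pow_sum]
    congr 1
    rw [Fin.sum_univ_eq_sum_range (fun m => m) k, Finset.sum_range_id, Nat.choose_two_right]
  -- combine
  have hsplit : (T.filter (fun B => ∃ i, t ∈ B i)).card +
      (T.filter (fun B => ¬ ∃ i, t ∈ B i)).card = T.card :=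
    Finset.card_filter_add_card_filter_not _
  have hgood : (Finset.univ.filter (Qt k t)).card = (T.filter (fun B => ∃ i, t ∈ B i)).card := by
    congr 1
    ext B
    simp only [hT, Qt, mem_filter, mem_univ, true_and]
    rfl
  have hle : (t : ℕ) ≤ k := Nat.lt_succ_iff.1 t.isLt
  have hpow : 2 ^ (k.choose 2 + (k - (t : ℕ))) = 2 ^ k.choose 2 * 2 ^ (k - (t : ℕ)) :=
    pow_add 2 _ _
  rw [hgood]
  rw [hBadcard, hTcard, hpow] at hsplit
  have e : 2 ^ k.choose 2 * (2 ^ (k - (t : ℕ)) - 1) =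
      2 ^ k.choose 2 * 2 ^ (k - (t : ℕ)) - 2 ^ k.choose 2 := by
    rw [Nat.mul_sub, mul_one]
  rw [e]
  exact Nat.eq_sub_of_add_eq hsplit

end Stmt13Aux

/-- `\overline{S}(n, n−1) = 2^{C(n−1,2)} · (2^n − n − 1)` for every `n ≥ 1`. -/
theorem stmt13 (n : ℕ) (hn : 1 ≤ n) :
    gstirling n (n - 1) = 2 ^ (n - 1).choose 2 * (2 ^ n - n - 1) := by
  classical
  obtain ⟨k, rfl⟩ : ∃ k, n = k + 1 := ⟨n - 1, by omega⟩
  open Finset Stmt13Aux in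
  have hsucc : k + 1 - 1 = k := rfl
  rw [hsucc]
  have hmain : gstirling (k + 1) k = (Finset.univ.filter (Stmt13Aux.Pred k)).card := by
    unfold gstirling
    congr 1
    ext B
    simp only [Finset.mem_filter, Stmt13Aux.Pred]
  rw [hmain]
  have hsplit : Finset.univ.filter (Stmt13Aux.Pred k) =
      Finset.univ.biUnion (fun t : Fin (k + 1) =>
        Finset.univ.filter (Stmt13Aux.Qt k t)) := by
    ext B
    simp only [Finset.mem_filter, Finset.mem_univ, true_and, Finset.mem_biUnion]
    constructor
    · intro h
      obtain ⟨t, ht⟩ := Stmt13Aux.Pred_imp_Qt h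
      exact ⟨t, ht⟩
    · rintro ⟨t, ht⟩
      exact Stmt13Aux.Qt_imp_Pred ht
  have hdisj : ∀ t ∈ (Finset.univ : Finset (Fin (k + 1))), ∀ s ∈ Finset.univ, t ≠ s →
      Disjoint (Finset.univ.filter (Stmt13Aux.Qt k t))
        (Finset.univ.filter (Stmt13Aux.Qt k s)) := by
    intro t _ s _ hts
    rw [Finset.disjoint_left]
    intro B hBt hBs
    exact hts (Stmt13Aux.Qt_unique (Finset.mem_filter.1 hBt).2 (Finset.mem_filter.1 hBs).2)
  rw [hsplit, Finset.card_biUnion hdisj]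
  have hterm : ∀ t : Fin (k + 1),
      (Finset.univ.filter (Stmt13Aux.Qt k t)).card =
        2 ^ k.choose 2 * (2 ^ (k - (t : ℕ)) - 1) := fun t => Stmt13Aux.card_Qt k t
  rw [Finset.sum_congr rfl (fun t _ => hterm t)]
  rw [Fin.sum_univ_eq_sum_range (fun t => 2 ^ k.choose 2 * (2 ^ (k - t) - 1)) (k + 1)]
  rw [← Finset.mul_sum, Stmt13Aux.geo]
  congr 1
end
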